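/- arXiv:1904.03563 — 8 statements merged into one kernel-verified Lean document; each statement's English description precedes it below -/
import Mathlib

section
/- Let f : ℝⁿ → ℝ be continuous on the nonnegative orthant and twice continuously differentiable on its interior, and let x* ≥ 0 be a local minimizer of f over the nonnegative orthant {x ∈ ℝⁿ : x ≥ 0}. Then there exist a sequence (xᵏ) in ℝⁿ with xᵏ > 0 componentwise for all k and xᵏ → x*, sequences (sᵏ) and (θᵏ) in ℝⁿ with sᵏ ≥ 0 and θᵏ ≥ 0 componentwise, and a sequence of scalars (δₖ) with δₖ > 0 and δₖ → 0, such that: (i) ∇f(xᵏ) − sᵏ → 0; (ii) min(xᵢᵏ, 1)·sᵢᵏ → 0 for every coordinate i = 1,…,n; (iii) the matrix ∇²f(xᵏ) + diag(θᵏ) + δₖI is positive semidefinite for every k; and (iv) min(xᵢᵏ, 1)²·θᵢᵏ → 0 for every coordinate i = 1,…,n. -/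
open Matrix Filter Topology

/-- The continuous linear map `w ↦ ∑ i, v i * w i`, representing the gradient vector `v`
as the Fréchet derivative of a scalar function. -/
noncomputable def dotCLM {n : ℕ} (v : Fin n → ℝ) : (Fin n → ℝ) →L[ℝ] ℝ :=
  ∑ i, v i • (ContinuousLinearMap.proj i : (Fin n → ℝ) →L[ℝ] ℝ)

/-- The continuous linear map `w ↦ A *ᵥ w`, representing the Hessian matrix `A`
as the Fréchet derivative of the gradient map. -/
noncomputable def mulVecCLM {n : ℕ} (A : Matrix (Fin n) (Fin n) ℝ) :
    (Fin n → ℝ) →L[ℝ] (Fin n → ℝ) :=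
  LinearMap.toContinuousLinearMap A.mulVecLin

lemma dotCLM_apply {n : ℕ} (v w : Fin n → ℝ) : dotCLM v w = ∑ i, v i * w i := by
  simp [dotCLM]

lemma mulVecCLM_apply {n : ℕ} (A : Matrix (Fin n) (Fin n) ℝ) (w : Fin n → ℝ) :
    mulVecCLM A w = A *ᵥ w := by
  simp [mulVecCLM]

lemma dotCLM_single {n : ℕ} (v : Fin n → ℝ) (i : Fin n) :
    dotCLM v (Pi.single i 1) = v i := by
  rw [dotCLM_apply]
  rw [Finset.sum_eq_single i]
  · simp
  · intro j _ hj; simp [Pi.single_apply, hj]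
  · simp

-- 1D second-order necessary condition
lemma second_deriv_nonneg (φ ψ : ℝ → ℝ) (c : ℝ)
    (hφ : ∀ᶠ t in 𝓝 (0:ℝ), HasDerivAt φ (ψ t) t)
    (hψ : HasDerivAt ψ c 0) (hψ0 : ψ 0 = 0)
    (hmin : IsLocalMin φ 0) : 0 ≤ c := by
  by_contra hc
  push_neg at hc
  -- slope of ψ at 0 tends to c
  have hslope : Tendsto (slope ψ 0) (𝓝[≠] (0:ℝ)) (𝓝 c) :=
    hasDerivAt_iff_tendsto_slope.1 hψ
  have hev : ∀ᶠ t in 𝓝[≠] (0:ℝ), slope ψ 0 t < c / 2 :=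
    hslope.eventually (Filter.Tendsto.eventually_lt_const (by linarith) tendsto_id)
  -- convert to a ball statement
  have hev' : ∀ᶠ t in 𝓝 (0:ℝ), (t ≠ 0 → slope ψ 0 t < c / 2) ∧ HasDerivAt φ (ψ t) t ∧ φ 0 ≤ φ t := by
    refine ((eventually_nhdsWithin_iff.1 hev).and (hφ.and (hmin : ∀ᶠ t in 𝓝 (0:ℝ), φ 0 ≤ φ t))).mono ?_
    · intro t ht
      exact ⟨fun h => ht.1 h, ht.2.1, ht.2.2⟩
  obtain ⟨ε, hε, hball⟩ := Metric.eventually_nhds_iff.1 hev'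
  set a := ε / 2 with ha
  have haε : ∀ t ∈ Set.Icc (0:ℝ) a, dist t (0:ℝ) < ε := by
    intro t ht
    rw [Real.dist_eq, sub_zero, abs_of_nonneg ht.1]
    have := ht.2; simp only [ha] at this ⊢; linarith
  have hcont : ContinuousOn φ (Set.Icc 0 a) := by
    intro t ht
    exact ((hball (haε t ht)).2.1).continuousAt.continuousWithinAt
  have hderiv : ∀ t ∈ Set.Ioo (0:ℝ) a, deriv φ t < 0 := by
    intro t ht
    have h1 := hball (haε t ⟨le_of_lt ht.1, le_of_lt ht.2⟩)
    rw [h1.2.1.deriv]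
    have hs := h1.1 (ne_of_gt ht.1)
    rw [slope_def_field] at hs
    have : (ψ t - ψ 0) / (t - 0) < c/2 := hs
    rw [hψ0, sub_zero, sub_zero, div_lt_iff₀ ht.1] at this
    have hneg : c / 2 * t < 0 := mul_neg_of_neg_of_pos (by linarith) ht.1
    linarith
  have hanti : StrictAntiOn φ (Set.Icc 0 a) := by
    apply strictAntiOn_of_deriv_neg (convex_Icc _ _) hcont
    rwa [interior_Icc]
  have ha0 : (0:ℝ) < a := by positivity
  have h1 : φ a < φ 0 := hanti ⟨le_refl _, le_of_lt ha0⟩ ⟨le_of_lt ha0, le_refl _⟩ ha0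
  have h2 : φ 0 ≤ φ a := (hball (haε a ⟨le_of_lt ha0, le_refl _⟩)).2.2
  linarith

lemma interior_conditions {n : ℕ} (F : (Fin n → ℝ) → ℝ)
    (G : (Fin n → ℝ) → (Fin n → ℝ)) (H : Matrix (Fin n) (Fin n) ℝ)
    (x₀ : Fin n → ℝ) (U : Set (Fin n → ℝ)) (hU : IsOpen U) (hx₀ : x₀ ∈ U)
    (hG : ∀ y ∈ U, HasFDerivAt F (dotCLM (G y)) y)
    (hH : HasFDerivAt G (mulVecCLM H) x₀)
    (hmin : IsLocalMin F x₀) :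
    G x₀ = 0 ∧ ∀ v : Fin n → ℝ, 0 ≤ v ⬝ᵥ (H *ᵥ v) := by
  have hG0 : G x₀ = 0 := by
    have h1 : fderiv ℝ F x₀ = 0 := hmin.fderiv_eq_zero
    have h2 : dotCLM (G x₀) = 0 := by rw [← (hG x₀ hx₀).fderiv, h1]
    funext i
    have := congrArg (fun L => L (Pi.single i 1)) h2
    simpa [dotCLM_single] using this
  refine ⟨hG0, fun v => ?_⟩
  set L : ℝ → (Fin n → ℝ) := fun t => x₀ + t • v with hL
  have hLderiv : ∀ t : ℝ, HasDerivAt L v t := by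
    intro t
    exact (by simpa using ((hasDerivAt_id t).smul_const v).const_add x₀ : HasDerivAt (fun t => x₀ + t • v) v t)
  have hL0 : L 0 = x₀ := by simp [hL]
  have hLcont : Continuous L := by continuity
  have hLev : ∀ᶠ t in 𝓝 (0:ℝ), L t ∈ U := by
    have : Tendsto L (𝓝 0) (𝓝 x₀) := by
      rw [← hL0]; exact hLcont.continuousAt
    exact this.eventually (hU.mem_nhds hx₀)
  set φ : ℝ → ℝ := fun t => F (L t) with hφdef
  set ψ : ℝ → ℝ := fun t => dotCLM v (G (L t)) with hψdef
  have hφ : ∀ᶠ t in 𝓝 (0:ℝ), HasDerivAt φ (ψ t) t := by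
    filter_upwards [hLev] with t ht
    have h1 : HasDerivAt (fun t => F (L t)) (dotCLM (G (L t)) v) t :=
      (hG (L t) ht).comp_hasDerivAt t (hLderiv t)
    have : dotCLM (G (L t)) v = ψ t := by
      rw [hψdef]; simp only [dotCLM_apply]; exact Finset.sum_congr rfl (fun i _ => mul_comm _ _)
    rwa [this] at h1
  have hGL : HasDerivAt (fun t => G (L t)) (H *ᵥ v) 0 := by
    have hH' : HasFDerivAt G (mulVecCLM H) (L 0) := by rwa [hL0]
    have h2 := hH'.comp_hasDerivAt (0:ℝ) (hLderiv 0)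
    rwa [mulVecCLM_apply] at h2
  have hψ : HasDerivAt ψ (dotCLM v (H *ᵥ v)) 0 :=
    ((dotCLM v).hasFDerivAt.comp_hasDerivAt 0 hGL : HasDerivAt (fun t => dotCLM v (G (L t))) _ 0)
  have hψ0 : ψ 0 = 0 := by simp [hψdef, hL0, hG0, dotCLM_apply]
  have hminφ : IsLocalMin φ 0 := by
    have : Tendsto L (𝓝 0) (𝓝 x₀) := by rw [← hL0]; exact hLcont.continuousAt
    have := this.eventually (hmin : ∀ᶠ x in 𝓝 x₀, F x₀ ≤ F x)
    filter_upwards [this] with t ht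
    simpa [hφdef, hL0] using ht
  have := second_deriv_nonneg φ ψ _ hφ hψ hψ0 hminφ
  rw [dotCLM_apply] at this
  simpa [dotProduct] using this

section deriv
variable {n : ℕ} (a : Fin n → ℝ)

/-- squared ℓ² distance to `a` -/
noncomputable def S2 (x : Fin n → ℝ) : ℝ := ∑ i, (x i - a i)^2

lemma hasFDerivAt_S2 (x : Fin n → ℝ) :
    HasFDerivAt (S2 a) (dotCLM (fun i => 2*(x i - a i))) x := by
  have h : ∀ i : Fin n, i ∈ Finset.univ → HasFDerivAt (fun x : Fin n → ℝ => (x i - a i)^2)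
      ((2*(x i - a i)) • (ContinuousLinearMap.proj i : (Fin n → ℝ) →L[ℝ] ℝ)) x := by
    intro i _
    have h1 : HasFDerivAt (fun x : Fin n → ℝ => x i - a i)
        (ContinuousLinearMap.proj i : (Fin n → ℝ) →L[ℝ] ℝ) x :=
      (hasFDerivAt_apply i x).sub_const (a i)
    have h2 := h1.fun_mul h1
    have e : (fun x : Fin n → ℝ => (x i - a i)^2) = (fun x => (x i - a i) * (x i - a i)) := by
      funext y; ring
    rw [e]
    refine h2.congr_fderiv ?_
    rw [two_mul, add_smul]
  have := HasFDerivAt.fun_sum h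
  exact this

lemma hasFDerivAt_Q (x : Fin n → ℝ) :
    HasFDerivAt (fun x => (S2 a x)^2) (dotCLM (fun i => 4 * S2 a x * (x i - a i))) x := by
  have h := (hasFDerivAt_S2 a x).fun_mul (hasFDerivAt_S2 a x)
  have e : (fun x => (S2 a x)^2) = (fun x => S2 a x * S2 a x) := by
    funext y; ring
  rw [e]
  have hsmul : ∀ (c : ℝ) (v : Fin n → ℝ), dotCLM (c • v) = c • dotCLM v := by
    intro c v
    simp [dotCLM, Finset.smul_sum, smul_smul]
  have e2 : (fun i => 4 * S2 a x * (x i - a i)) =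
      (2 * S2 a x) • (fun i => 2*(x i - a i)) := by
    funext i; simp [Pi.smul_apply]; ring
  rw [e2, hsmul, two_mul, add_smul]
  convert h using 1

lemma hasFDerivAt_logsum (x : Fin n → ℝ) (hx : ∀ i, 0 < x i) :
    HasFDerivAt (fun x : Fin n → ℝ => ∑ i, Real.log (x i)) (dotCLM (fun i => (x i)⁻¹)) x := by
  have h : ∀ i : Fin n, i ∈ Finset.univ → HasFDerivAt (fun x : Fin n → ℝ => Real.log (x i))
      ((x i)⁻¹ • (ContinuousLinearMap.proj i : (Fin n → ℝ) →L[ℝ] ℝ)) x := by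
    intro i _
    exact (Real.hasDerivAt_log (ne_of_gt (hx i))).comp_hasFDerivAt (f := fun y : Fin n → ℝ => y i) x (hasFDerivAt_apply i x)
  have := HasFDerivAt.fun_sum h
  simpa [dotCLM] using this
end deriv

section
variable {n : ℕ} (gradf : (Fin n → ℝ) → (Fin n → ℝ)) (hessf : (Fin n → ℝ) → Matrix (Fin n) (Fin n) ℝ)
  (a : Fin n → ℝ) (μ : ℝ)

noncomputable def Gv (x : Fin n → ℝ) : Fin n → ℝ :=
  fun i => gradf x i + 4 * S2 a x * (x i - a i) - μ * (x i)⁻¹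

noncomputable def Fv (f : (Fin n → ℝ) → ℝ) (x : Fin n → ℝ) : ℝ :=
  f x + (S2 a x)^2 - μ * ∑ i, Real.log (x i)

noncomputable def Hm (x : Fin n → ℝ) : Matrix (Fin n) (Fin n) ℝ :=
  hessf x + Matrix.of (fun i j => 8 * (x i - a i) * (x j - a j))
    + (4 * S2 a x) • 1 + Matrix.diagonal (fun i => μ * ((x i)^2)⁻¹)

lemma dotCLM_add {n : ℕ} (v w : Fin n → ℝ) : dotCLM (v + w) = dotCLM v + dotCLM w := by
  ext u; simp [dotCLM_apply, Finset.sum_add_distrib, add_mul]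

lemma dotCLM_sub {n : ℕ} (v w : Fin n → ℝ) : dotCLM (v - w) = dotCLM v - dotCLM w := by
  ext u; simp [dotCLM_apply, Finset.sum_sub_distrib, sub_mul]

lemma dotCLM_smul {n : ℕ} (c : ℝ) (v : Fin n → ℝ) : dotCLM (c • v) = c • dotCLM v := by
  ext u; simp [dotCLM_apply, Finset.mul_sum, mul_assoc]

lemma hasFDerivAt_F (f : (Fin n → ℝ) → ℝ) (x : Fin n → ℝ) (hx : ∀ i, 0 < x i)
    (hgx : HasFDerivAt f (dotCLM (gradf x)) x) :
    HasFDerivAt (Fv a μ f) (dotCLM (Gv gradf a μ x)) x := by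
  have h := (hgx.add (hasFDerivAt_Q a x)).sub ((hasFDerivAt_logsum x hx).const_mul μ)
  have e : Gv gradf a μ x = (gradf x + fun i => 4 * S2 a x * (x i - a i)) -
      μ • (fun i => (x i)⁻¹) := by
    funext i; simp [Gv]
  rw [e, dotCLM_sub, dotCLM_add, dotCLM_smul]
  exact h

lemma hasFDerivAt_G (x : Fin n → ℝ) (hx : ∀ i, 0 < x i)
    (hhx : HasFDerivAt gradf (mulVecCLM (hessf x)) x) :
    HasFDerivAt (Gv gradf a μ) (mulVecCLM (Hm hessf a μ x)) x := by
  rw [hasFDerivAt_pi']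
  intro i
  have c1 : HasFDerivAt (fun x => gradf x i)
      ((ContinuousLinearMap.proj i).comp (mulVecCLM (hessf x))) x := hasFDerivAt_pi'.1 hhx i
  have h4S2 : HasFDerivAt (fun x : Fin n → ℝ => 4 * S2 a x)
      ((4:ℝ) • dotCLM (fun j => 2*(x j - a j))) x := (hasFDerivAt_S2 a x).const_mul 4
  have hproj : HasFDerivAt (fun x : Fin n → ℝ => x i - a i)
      (ContinuousLinearMap.proj i : (Fin n → ℝ) →L[ℝ] ℝ) x := (hasFDerivAt_apply i x).sub_const _
  have c2 := h4S2.fun_mul hproj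
  have hinv : HasFDerivAt (fun x : Fin n → ℝ => (x i)⁻¹)
      ((-((x i)^2)⁻¹) • (ContinuousLinearMap.proj i : (Fin n → ℝ) →L[ℝ] ℝ)) x :=
    (hasDerivAt_inv (ne_of_gt (hx i))).comp_hasFDerivAt (f := fun y : Fin n → ℝ => y i) x (hasFDerivAt_apply i x)
  have c3 := hinv.const_mul μ
  have h := (c1.fun_add c2).fun_sub c3
  have e : (fun x => Gv gradf a μ x i) =
      (fun x : Fin n → ℝ => gradf x i + 4 * S2 a x * (x i - a i) - μ * (x i)⁻¹) := by
    funext y; simp [Gv]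
  rw [e]
  convert h using 1
  ext w
  simp only [ContinuousLinearMap.comp_apply, ContinuousLinearMap.add_apply,
    ContinuousLinearMap.sub_apply, ContinuousLinearMap.smul_apply, ContinuousLinearMap.proj_apply,
    mulVecCLM_apply, dotCLM_apply, Hm, Matrix.add_mulVec, Matrix.smul_mulVec,
    Matrix.one_mulVec, Pi.add_apply, Pi.smul_apply, smul_eq_mul]
  rw [Matrix.mulVec_diagonal]
  have : (Matrix.of (fun i j => 8 * (x i - a i) * (x j - a j)) *ᵥ w) i
      = (x i - a i) * (4 * ∑ j, 2 * (x j - a j) * w j) := by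
    simp [Matrix.mulVec, dotProduct, Finset.mul_sum]
    congr 1; funext j; ring
  rw [this]
  ring
end

lemma psd_step {n : ℕ} (hessf : (Fin n → ℝ) → Matrix (Fin n) (Fin n) ℝ)
    (a : Fin n → ℝ) (μ : ℝ) (x v : Fin n → ℝ) (hμ : 0 ≤ μ)
    (h : 0 ≤ v ⬝ᵥ (Hm hessf a μ x *ᵥ v)) :
    0 ≤ v ⬝ᵥ ((hessf x + Matrix.diagonal (fun i => μ * ((x i)^2)⁻¹)
      + (12 * S2 a x + μ) • (1 : Matrix (Fin n) (Fin n) ℝ)) *ᵥ v) := by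
  have e1 : ∀ (B C : Matrix (Fin n) (Fin n) ℝ),
      v ⬝ᵥ ((B + C) *ᵥ v) = v ⬝ᵥ (B *ᵥ v) + v ⬝ᵥ (C *ᵥ v) := by
    intro B C; rw [Matrix.add_mulVec, dotProduct_add]
  have esmul : ∀ c : ℝ, v ⬝ᵥ ((c • (1 : Matrix (Fin n) (Fin n) ℝ)) *ᵥ v) = c * ∑ i, v i ^ 2 := by
    intro c
    rw [Matrix.smul_mulVec, Matrix.one_mulVec, dotProduct_smul]
    simp [dotProduct, Finset.mul_sum, smul_eq_mul]
    congr 1; funext i; ring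
  have eB : v ⬝ᵥ ((Matrix.of fun i j => 8 * (x i - a i) * (x j - a j)) *ᵥ v)
      = 8 * (∑ j, (x j - a j) * v j) * (∑ j, (x j - a j) * v j) := by
    simp only [dotProduct, Matrix.mulVec, Matrix.of_apply, Finset.mul_sum, Finset.sum_mul]
    rw [Finset.sum_comm]
    congr 1; funext j
    congr 1; funext i
    ring
  have ediag : v ⬝ᵥ (Matrix.diagonal (fun i => μ * ((x i)^2)⁻¹) *ᵥ v)
      = ∑ i, μ * ((x i)^2)⁻¹ * v i ^ 2 := by
    simp only [dotProduct]
    congr 1; funext i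
    rw [Matrix.mulVec_diagonal]
    ring
  have hCS : (∑ j, (x j - a j) * v j)^2 ≤ S2 a x * ∑ j, v j ^ 2 := by
    simpa [S2] using Finset.sum_mul_sq_le_sq_mul_sq Finset.univ (fun j => x j - a j) v
  have hv2 : 0 ≤ ∑ i, v i ^ 2 := Finset.sum_nonneg (fun i _ => sq_nonneg _)
  rw [e1, e1, esmul, ediag]
  rw [Hm, e1, e1, e1, esmul, ediag, eB] at h
  nlinarith [sq_nonneg (∑ j, (x j - a j) * v j)]

lemma sq_le_of_sq_le {a b : ℝ} (hb : 0 ≤ b) (h : a^2 ≤ b^2) : |a| ≤ b := by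
  nlinarith [abs_nonneg a, sq_abs a]

lemma sq_lt_of_sq_lt {a b : ℝ} (hb : 0 < b) (h : a^2 < b^2) : |a| < b := by
  nlinarith [abs_nonneg a, sq_abs a]

lemma isClosed_orthant {n : ℕ} (t : ℝ) : IsClosed {x : Fin n → ℝ | ∀ i, t ≤ x i} := by
  have : {x : Fin n → ℝ | ∀ i, t ≤ x i} = ⋂ i, (fun x : Fin n → ℝ => x i) ⁻¹' Set.Ici t := by
    ext x; simp
  rw [this]
  exact isClosed_iInter (fun i => isClosed_Ici.preimage (continuous_apply i))

lemma isOpen_orthant {n : ℕ} (t : ℝ) : IsOpen {x : Fin n → ℝ | ∀ i, t < x i} := by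
  have : {x : Fin n → ℝ | ∀ i, t < x i} = ⋂ i, (fun x : Fin n → ℝ => x i) ⁻¹' Set.Ioi t := by
    ext x; simp
  rw [this]
  exact isOpen_iInter_of_finite (fun i => isOpen_Ioi.preimage (continuous_apply i))

set_option maxHeartbeats 2000000 in
lemma key {n : ℕ}
    (f : (Fin n → ℝ) → ℝ)
    (gradf : (Fin n → ℝ) → (Fin n → ℝ))
    (hessf : (Fin n → ℝ) → Matrix (Fin n) (Fin n) ℝ)
    (hcont : ContinuousOn f {x : Fin n → ℝ | ∀ i, 0 ≤ x i})
    (hgrad : ∀ y : Fin n → ℝ, (∀ i, 0 < y i) → HasFDerivAt f (dotCLM (gradf y)) y)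
    (hhess : ∀ y : Fin n → ℝ, (∀ i, 0 < y i) → HasFDerivAt gradf (mulVecCLM (hessf y)) y)
    (xstar : Fin n → ℝ) (hxstar : ∀ i, 0 ≤ xstar i)
    (hmin : IsLocalMinOn f {x : Fin n → ℝ | ∀ i, 0 ≤ x i} xstar)
    (ε : ℝ) (hε : 0 < ε) (hε1 : ε ≤ 1) :
    ∃ (x s θ : Fin n → ℝ) (δ : ℝ),
      (∀ i, 0 < x i) ∧ ‖x - xstar‖ ≤ ε ∧ (∀ i, 0 ≤ s i) ∧ (∀ i, 0 ≤ θ i) ∧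
      0 < δ ∧ δ ≤ ε ∧ ‖gradf x - s‖ ≤ ε ∧ (∀ i, min (x i) 1 * s i ≤ ε) ∧
      (∀ v : Fin n → ℝ, 0 ≤ v ⬝ᵥ ((hessf x + Matrix.diagonal θ
        + δ • (1 : Matrix (Fin n) (Fin n) ℝ)) *ᵥ v)) ∧
      (∀ i, (min (x i) 1)^2 * θ i ≤ ε) := by
  classical
  set S : Set (Fin n → ℝ) := {x | ∀ i, 0 ≤ x i} with hSdef
  -- Step 1: radius of local minimality
  have hmin' : {x | f xstar ≤ f x} ∈ 𝓝[S] xstar := hmin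
  obtain ⟨r₀, hr₀, hr₀min⟩ := Metric.mem_nhdsWithin_iff.1 hmin'
  set r : ℝ := min (r₀/2) 1 with hrdef
  have hr : 0 < r := lt_min (by linarith) one_pos
  have hr1 : r ≤ 1 := min_le_right _ _
  have hfr : ∀ x ∈ S, ‖x - xstar‖ ≤ r → f xstar ≤ f x := by
    intro x hxS hxr
    refine hr₀min ⟨?_, hxS⟩
    rw [Metric.mem_ball, dist_eq_norm]
    calc ‖x - xstar‖ ≤ r := hxr
      _ ≤ r₀/2 := min_le_left _ _
      _ < r₀ := by linarith
  set M : ℝ := ‖xstar‖ + 2 with hMdef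
  have hM1 : (1:ℝ) ≤ M := by have := norm_nonneg xstar; simp only [hMdef]; linarith
  have hlogM : 0 ≤ Real.log M := Real.log_nonneg hM1
  -- coordinate bound on the ball
  have hcoordM : ∀ x : Fin n → ℝ, ‖x - xstar‖ ≤ r → ∀ i, x i ≤ M := by
    intro x hx i
    have h1 : |x i - xstar i| ≤ ‖x - xstar‖ := by
      simpa [Real.norm_eq_abs] using norm_le_pi_norm (x - xstar) i
    have h3 := (abs_le.1 h1).2
    have h4 : |xstar i| ≤ ‖xstar‖ := by
      simpa [Real.norm_eq_abs] using norm_le_pi_norm xstar i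
    have h5 := (abs_le.1 h4).2
    have h6 := le_abs_self (xstar i)
    simp only [hMdef]
    linarith
  -- Step: choose η
  set η : ℝ := min 1 (min (ε/4) (min (ε/24) (min (ε^2/2) (r^2/2)))) with hηdef
  have hη : 0 < η := by
    refine lt_min one_pos (lt_min (by linarith) (lt_min (by linarith) (lt_min ?_ ?_))) <;> positivity
  have hη1 : η ≤ 1 := min_le_left _ _
  have hηε4 : η ≤ ε/4 := le_trans (min_le_right _ _) (min_le_left _ _)
  have hηε24 : η ≤ ε/24 :=
    le_trans (min_le_right _ _) (le_trans (min_le_right _ _) (min_le_left _ _))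
  have hηε2 : η ≤ ε^2/2 :=
    le_trans (min_le_right _ _) (le_trans (min_le_right _ _)
      (le_trans (min_le_right _ _) (min_le_left _ _)))
  have hηr2 : η ≤ r^2/2 :=
    le_trans (min_le_right _ _) (le_trans (min_le_right _ _)
      (le_trans (min_le_right _ _) (min_le_right _ _)))
  -- Step 2: choose c > 0
  have hzS : ∀ c : ℝ, 0 ≤ c → (fun i : Fin n => xstar i + c) ∈ S := by
    intro c hc i
    show 0 ≤ xstar i + c
    have := hxstar i
    linarith
  have hztend : Tendsto (fun c : ℝ => (fun i : Fin n => xstar i + c)) (𝓝[>] (0:ℝ)) (𝓝[S] xstar) := by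
    rw [tendsto_nhdsWithin_iff]
    constructor
    · have hzc : Continuous (fun c : ℝ => (fun i : Fin n => xstar i + c)) := by
        apply continuous_pi
        intro i
        exact continuous_const.add continuous_id
      have h0 : (fun i : Fin n => xstar i + (0:ℝ)) = xstar := by funext i; simp
      have := hzc.tendsto 0
      rw [h0] at this
      exact this.mono_left nhdsWithin_le_nhds
    · filter_upwards [self_mem_nhdsWithin] with c hc
      exact hzS c (le_of_lt hc)
  have hxstarS : xstar ∈ S := fun i => hxstar i
  have hfz_tend : Tendsto (fun c : ℝ => f (fun i : Fin n => xstar i + c)) (𝓝[>] (0:ℝ))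
      (𝓝 (f xstar)) :=
    Filter.Tendsto.comp (hcont.continuousWithinAt hxstarS) hztend
  have ev1 : ∀ᶠ c in 𝓝[>] (0:ℝ), f (fun i : Fin n => xstar i + c) < f xstar + η^2/4 :=
    hfz_tend.eventually_lt_const (lt_add_of_pos_right _ (div_pos (pow_pos hη 2) (by norm_num)))
  have ev2 : ∀ᶠ c in 𝓝[>] (0:ℝ), ((n:ℝ) * c^2)^2 < η^2/4 := by
    have hc : Continuous (fun c : ℝ => ((n:ℝ) * c^2)^2) :=
      (continuous_const.mul (continuous_id.pow 2)).pow 2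
    have h0 : Tendsto (fun c : ℝ => ((n:ℝ) * c^2)^2) (𝓝[>] (0:ℝ)) (𝓝 0) := by
      have := hc.tendsto 0
      simp only [mul_zero, ne_eq, OfNat.ofNat_ne_zero, not_false_eq_true, zero_pow] at this
      exact this.mono_left nhdsWithin_le_nhds
    exact h0.eventually_lt_const (by positivity)
  have ev3 : ∀ᶠ c in 𝓝[>] (0:ℝ), c < r := by
    have : Set.Iio r ∈ 𝓝[>] (0:ℝ) := by
      apply nhdsWithin_le_nhds
      exact Iio_mem_nhds hr
    filter_upwards [this] with c hc using hc
  obtain ⟨c, hcfz, hcn, hcr, hc0⟩ := (ev1.and (ev2.and (ev3.and self_mem_nhdsWithin))).exists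
  set z : Fin n → ℝ := fun i => xstar i + c with hzdef
  have hc0' : (0:ℝ) < c := Set.mem_Ioi.1 hc0
  have hzr : ‖z - xstar‖ ≤ r := by
    rw [pi_norm_le_iff_of_nonneg (le_of_lt hr)]
    intro i
    simp only [hzdef, Pi.sub_apply, Real.norm_eq_abs]
    rw [show xstar i + c - xstar i = c by ring, abs_of_pos hc0']
    exact le_of_lt hcr
  have hzpos : ∀ i, 0 < z i := by
    intro i; simp only [hzdef]; have := hxstar i; linarith
  have hS2z : S2 xstar z = (n:ℝ) * c^2 := by
    simp only [S2, hzdef]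
    rw [Finset.sum_congr rfl (fun i _ => by ring_nf : ∀ i ∈ Finset.univ, (xstar i + c - xstar i)^2 = c^2)]
    simp [Finset.sum_const, mul_comm]
  -- Step 3: choose μ
  set Lz : ℝ := |∑ i, Real.log (z i)| with hLzdef
  have hLz : 0 ≤ Lz := abs_nonneg _
  set D : ℝ := 1 + (n:ℝ) * Real.log M + Lz with hDdef
  have hD : 0 < D := by have : (0:ℝ) ≤ (n:ℝ) * Real.log M := by positivity
                        simp only [hDdef]; linarith
  set μ : ℝ := min (ε/2) (min 1 (η^2/8 / D)) with hμdef
  have hμpos : 0 < μ := by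
    refine lt_min (by linarith) (lt_min one_pos (by positivity))
  have hμε2 : μ ≤ ε/2 := min_le_left _ _
  have hμ1 : μ ≤ 1 := le_trans (min_le_right _ _) (min_le_left _ _)
  have hμD : μ ≤ η^2/8 / D := le_trans (min_le_right _ _) (min_le_right _ _)
  have hμlogM : μ * ((n:ℝ) * Real.log M) ≤ η^2/8 := by
    have h1 : μ * D ≤ η^2/8 := by
      rw [← div_mul_cancel₀ (η^2/8) (ne_of_gt hD)]
      exact mul_le_mul_of_nonneg_right hμD (le_of_lt hD)
    have h2 : (n:ℝ) * Real.log M ≤ D := by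
      simp only [hDdef]; linarith
    calc μ * ((n:ℝ) * Real.log M) ≤ μ * D := mul_le_mul_of_nonneg_left h2 (le_of_lt hμpos)
      _ ≤ η^2/8 := h1
  have hμLz : μ * Lz ≤ η^2/8 := by
    have h1 : μ * D ≤ η^2/8 := by
      rw [← div_mul_cancel₀ (η^2/8) (ne_of_gt hD)]
      exact mul_le_mul_of_nonneg_right hμD (le_of_lt hD)
    have h2 : Lz ≤ D := by
      have : (0:ℝ) ≤ (n:ℝ) * Real.log M := by positivity
      simp only [hDdef]; linarith
    calc μ * Lz ≤ μ * D := mul_le_mul_of_nonneg_left h2 (le_of_lt hμpos)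
      _ ≤ η^2/8 := h1
  -- Step 4: bound on F z
  have hFz : Fv xstar μ f z ≤ f xstar + 5 * η^2 / 8 := by
    have h1 : f z < f xstar + η^2/4 := hcfz
    have h2 : (S2 xstar z)^2 < η^2/4 := by rw [hS2z]; exact hcn
    have h3 : - (μ * ∑ i, Real.log (z i)) ≤ μ * Lz := by
      rw [hLzdef]
      calc -(μ * ∑ i, Real.log (z i)) = μ * (-(∑ i, Real.log (z i))) := by ring
        _ ≤ μ * |∑ i, Real.log (z i)| :=
            mul_le_mul_of_nonneg_left (neg_le_abs _) (le_of_lt hμpos)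
    simp only [Fv]
    have := hμLz
    linarith
  -- Step 5: choose t
  set A : ℝ := (Fv xstar μ f z - f xstar + μ * ((n:ℝ) - 1) * Real.log M + 1)/μ with hAdef
  set t : ℝ := min c (Real.exp (-A)) with htdef
  have ht0 : 0 < t := lt_min hc0' (Real.exp_pos _)
  have htc : t ≤ c := min_le_left _ _
  have htkey : f xstar - μ * Real.log t - μ * ((n:ℝ) - 1) * Real.log M > Fv xstar μ f z := by
    have h1 : Real.log t ≤ -A := by
      calc Real.log t ≤ Real.log (Real.exp (-A)) :=
            Real.log_le_log ht0 (min_le_right _ _)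
        _ = -A := Real.log_exp _
    have h2 : μ * (-Real.log t) ≥ μ * A :=
      mul_le_mul_of_nonneg_left (by linarith) (le_of_lt hμpos)
    have h3 : μ * A = Fv xstar μ f z - f xstar + μ * ((n:ℝ) - 1) * Real.log M + 1 := by
      rw [hAdef, mul_div_cancel₀ _ (ne_of_gt hμpos)]
    have h4 : μ * (-Real.log t) = -(μ * Real.log t) := by ring
    rw [h4] at h2
    linarith
  -- Step 6: compact set and minimizer
  set C : Set (Fin n → ℝ) := Metric.closedBall xstar r ∩ {x | ∀ i, t ≤ x i} with hCdef
  have hCsub : C ⊆ S := by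
    intro x hx i
    have := hx.2 i
    linarith
  have hCball : ∀ x ∈ C, ‖x - xstar‖ ≤ r := by
    intro x hx
    have := hx.1
    rwa [Metric.mem_closedBall, dist_eq_norm] at this
  have hCcompact : IsCompact C :=
    (isCompact_closedBall xstar r).inter_right (isClosed_orthant t)
  have hzC : z ∈ C := by
    constructor
    · rw [Metric.mem_closedBall, dist_eq_norm]; exact hzr
    · intro i
      simp only [hzdef]
      have := hxstar i
      linarith
  have hFcont : ContinuousOn (Fv xstar μ f) C := by
    have h1 : ContinuousOn f C := hcont.mono hCsub
    have h2 : Continuous (fun x : Fin n → ℝ => (S2 xstar x)^2) := by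
      have : Continuous (S2 xstar) :=
        continuous_finset_sum _ (fun i _ => ((continuous_apply i).sub continuous_const).pow 2)
      exact this.pow 2
    have h3 : ContinuousOn (fun x : Fin n → ℝ => ∑ i, Real.log (x i)) C := by
      apply continuousOn_finset_sum
      intro i _
      intro x hx
      have hxi : x i ≠ 0 := ne_of_gt (lt_of_lt_of_le ht0 (hx.2 i))
      have hca : ContinuousAt (fun y : Fin n → ℝ => Real.log (y i)) x :=
        ContinuousAt.comp (g := Real.log) (Real.continuousAt_log hxi)
          ((continuous_apply i).continuousAt)
      exact hca.continuousWithinAt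
    exact (h1.add h2.continuousOn).sub (continuousOn_const.mul h3)
  obtain ⟨w, hwC, hwmin⟩ := hCcompact.exists_isMinOn ⟨z, hzC⟩ hFcont
  have hwmin' : ∀ x ∈ C, Fv xstar μ f w ≤ Fv xstar μ f x := fun x hx => hwmin hx
  have hwt : ∀ i, t ≤ w i := hwC.2
  have hwpos : ∀ i, 0 < w i := fun i => lt_of_lt_of_le ht0 (hwt i)
  have hwS : w ∈ S := hCsub hwC
  have hwr : ‖w - xstar‖ ≤ r := hCball w hwC
  have hwf : f xstar ≤ f w := hfr w hwS hwr
  have hwM : ∀ i, w i ≤ M := hcoordM w hwr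
  have hwlogM : ∀ i, Real.log (w i) ≤ Real.log M :=
    fun i => Real.log_le_log (hwpos i) (hwM i)
  have hwFz : Fv xstar μ f w ≤ Fv xstar μ f z := hwmin' z hzC
  -- Step 8(f): S2 bound
  have hS2w_nonneg : 0 ≤ S2 xstar w := Finset.sum_nonneg (fun i _ => sq_nonneg _)
  have hS2w : S2 xstar w ≤ η := by
    have h1 : Fv xstar μ f w ≥ f xstar + (S2 xstar w)^2 - μ * ((n:ℝ) * Real.log M) := by
      simp only [Fv]
      have h2 : ∑ i, Real.log (w i) ≤ (n:ℝ) * Real.log M := by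
        calc ∑ i, Real.log (w i) ≤ ∑ _i : Fin n, Real.log M :=
              Finset.sum_le_sum (fun i _ => hwlogM i)
          _ = (n:ℝ) * Real.log M := by simp [Finset.sum_const, mul_comm]
      have h3 : μ * ∑ i, Real.log (w i) ≤ μ * ((n:ℝ) * Real.log M) :=
        mul_le_mul_of_nonneg_left h2 (le_of_lt hμpos)
      linarith
    have h4 : (S2 xstar w)^2 ≤ η^2 := by
      linarith [hμlogM, hFz, hwFz, h1, sq_nonneg η]
    have h5 := sq_le_of_sq_le (le_of_lt hη) h4
    rwa [abs_of_nonneg hS2w_nonneg] at h5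
  have hd2 : ∀ i, (w i - xstar i)^2 ≤ η := by
    intro i
    calc (w i - xstar i)^2 ≤ S2 xstar w :=
          Finset.single_le_sum (fun j (_ : j ∈ Finset.univ) => sq_nonneg (w j - xstar j))
            (Finset.mem_univ i)
      _ ≤ η := hS2w
  -- Step 8(h): strictly inside the ball
  have hwball : ‖w - xstar‖ < r := by
    rw [pi_norm_lt_iff hr]
    intro i
    simp only [Pi.sub_apply, Real.norm_eq_abs]
    apply sq_lt_of_sq_lt hr
    calc (w i - xstar i)^2 ≤ η := hd2 i
      _ ≤ r^2/2 := hηr2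
      _ < r^2 := by have : 0 < r^2 := by positivity
                    linarith
  -- Step 8(i): strictly above t
  have hwgt : ∀ i, t < w i := by
    intro i
    rcases lt_or_ge t (w i) with h | h
    · exact h
    have hwi : w i = t := le_antisymm h (hwt i)
    exfalso
    have hsum : ∑ j, Real.log (w j) =
        Real.log (w i) + ∑ j ∈ Finset.univ.erase i, Real.log (w j) :=
      (Finset.add_sum_erase _ _ (Finset.mem_univ i)).symm
    have hn1 : ((Finset.univ.erase i).card : ℝ) = (n:ℝ) - 1 := by
      rw [Finset.card_erase_of_mem (Finset.mem_univ i)]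
      simp only [Finset.card_univ, Fintype.card_fin]
      have hn : 1 ≤ n := Fin.pos i
      push_cast [Nat.cast_sub hn]
      ring
    have herase : ∑ j ∈ Finset.univ.erase i, Real.log (w j) ≤ ((n:ℝ) - 1) * Real.log M := by
      calc ∑ j ∈ Finset.univ.erase i, Real.log (w j)
          ≤ ∑ _j ∈ Finset.univ.erase i, Real.log M :=
            Finset.sum_le_sum (fun j _ => hwlogM j)
        _ = ((Finset.univ.erase i).card : ℝ) * Real.log M := by
            rw [Finset.sum_const, nsmul_eq_mul]
        _ = ((n:ℝ) - 1) * Real.log M := by rw [hn1]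
    have hlow : Fv xstar μ f w ≥
        f xstar - μ * Real.log t - μ * ((n:ℝ) - 1) * Real.log M := by
      simp only [Fv]
      have h5 : ∑ j, Real.log (w j) ≤ Real.log t + ((n:ℝ) - 1) * Real.log M := by
        rw [hsum, hwi]
        linarith
      have h6 : μ * ∑ j, Real.log (w j) ≤ μ * (Real.log t + ((n:ℝ) - 1) * Real.log M) :=
        mul_le_mul_of_nonneg_left h5 (le_of_lt hμpos)
      linarith [sq_nonneg (S2 xstar w), hwf, h6]
    linarith [htkey, hwFz]
  -- Step 9: interior local minimum
  have hUopen : IsOpen (Metric.ball xstar r ∩ {x : Fin n → ℝ | ∀ i, t < x i}) :=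
    Metric.isOpen_ball.inter (isOpen_orthant t)
  have hwU : w ∈ Metric.ball xstar r ∩ {x : Fin n → ℝ | ∀ i, t < x i} := by
    constructor
    · rw [Metric.mem_ball, dist_eq_norm]; exact hwball
    · exact hwgt
  have hUC : Metric.ball xstar r ∩ {x : Fin n → ℝ | ∀ i, t < x i} ⊆ C := by
    intro x hx
    exact ⟨Metric.ball_subset_closedBall hx.1, fun i => le_of_lt (hx.2 i)⟩
  have hlocmin : IsLocalMin (Fv xstar μ f) w := by
    have hev : ∀ᶠ y in 𝓝 w, y ∈ Metric.ball xstar r ∩ {x : Fin n → ℝ | ∀ i, t < x i} :=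
      hUopen.mem_nhds hwU
    filter_upwards [hev] with y hy
    exact hwmin' y (hUC hy)
  -- Step 10: interior first/second order conditions
  have hposopen : IsOpen {x : Fin n → ℝ | ∀ i, 0 < x i} := isOpen_orthant 0
  obtain ⟨hG0, hHpsd⟩ := interior_conditions (Fv xstar μ f) (Gv gradf xstar μ)
    (Hm hessf xstar μ w) w {x | ∀ i, 0 < x i} hposopen hwpos
    (fun y hy => hasFDerivAt_F gradf xstar μ f y hy (hgrad y hy))
    (hasFDerivAt_G gradf hessf xstar μ w hwpos (hhess w hwpos))
    hlocmin
  -- Step 11: construct outputs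
  refine ⟨w, fun i => μ * (w i)⁻¹, fun i => μ * ((w i)^2)⁻¹, 12 * S2 xstar w + μ,
    hwpos, ?_, ?_, ?_, ?_, ?_, ?_, ?_, ?_, ?_⟩
  · -- ‖w - xstar‖ ≤ ε
    rw [pi_norm_le_iff_of_nonneg (le_of_lt hε)]
    intro i
    simp only [Pi.sub_apply, Real.norm_eq_abs]
    apply sq_le_of_sq_le (le_of_lt hε)
    calc (w i - xstar i)^2 ≤ η := hd2 i
      _ ≤ ε^2/2 := hηε2
      _ ≤ ε^2 := by have : 0 ≤ ε^2 := sq_nonneg ε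
                    linarith
  · intro i
    exact mul_nonneg (le_of_lt hμpos) (inv_nonneg.2 (le_of_lt (hwpos i)))
  · intro i
    exact mul_nonneg (le_of_lt hμpos) (inv_nonneg.2 (sq_nonneg _))
  · linarith [hS2w_nonneg, hμpos]
  · -- δ ≤ ε
    have : 12 * S2 xstar w ≤ 12 * η := by linarith
    have := hηε24
    linarith
  · -- gradient bound
    rw [pi_norm_le_iff_of_nonneg (le_of_lt hε)]
    intro i
    have hGi : Gv gradf xstar μ w i = 0 := by rw [hG0]; rfl
    simp only [Gv] at hGi
    have heq : gradf w i - μ * (w i)⁻¹ = -(4 * S2 xstar w * (w i - xstar i)) := by linarith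
    simp only [Pi.sub_apply, Real.norm_eq_abs]
    rw [heq, abs_neg, abs_mul, abs_mul]
    have h1 : |(4:ℝ)| = 4 := by norm_num
    have h2 : |S2 xstar w| = S2 xstar w := abs_of_nonneg hS2w_nonneg
    have h3 : |w i - xstar i| ≤ 1 := by
      apply sq_le_of_sq_le zero_le_one
      calc (w i - xstar i)^2 ≤ η := hd2 i
        _ ≤ 1 := hη1
        _ ≤ 1^2 := by norm_num

    rw [h1, h2]
    calc 4 * S2 xstar w * |w i - xstar i| ≤ 4 * S2 xstar w * 1 :=
          mul_le_mul_of_nonneg_left h3 (by positivity)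
      _ = 4 * S2 xstar w := by ring
      _ ≤ 4 * η := by linarith
      _ ≤ 4 * (ε/4) := by linarith
      _ = ε := by ring
  · -- min * s ≤ ε
    intro i
    have h1 : min (w i) 1 ≤ w i := min_le_left _ _
    have h2 : 0 ≤ μ * (w i)⁻¹ := mul_nonneg (le_of_lt hμpos) (inv_nonneg.2 (le_of_lt (hwpos i)))
    have hne : w i ≠ 0 := ne_of_gt (hwpos i)
    calc min (w i) 1 * (μ * (w i)⁻¹) ≤ w i * (μ * (w i)⁻¹) :=
          mul_le_mul_of_nonneg_right h1 h2
      _ = μ := by field_simp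
      _ ≤ ε := by linarith
  · -- PSD
    intro v
    exact psd_step hessf xstar μ w v (le_of_lt hμpos) (hHpsd v)
  · -- min^2 * θ ≤ ε
    intro i
    have h0 : 0 ≤ min (w i) 1 := le_min (le_of_lt (hwpos i)) zero_le_one
    have h1 : min (w i) 1 ≤ w i := min_le_left _ _
    have hsq : (min (w i) 1)^2 ≤ (w i)^2 := pow_le_pow_left₀ h0 h1 2
    have h2 : 0 ≤ μ * ((w i)^2)⁻¹ := mul_nonneg (le_of_lt hμpos) (inv_nonneg.2 (sq_nonneg _))
    have hne : w i ≠ 0 := ne_of_gt (hwpos i)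
    calc (min (w i) 1)^2 * (μ * ((w i)^2)⁻¹) ≤ (w i)^2 * (μ * ((w i)^2)⁻¹) :=
          mul_le_mul_of_nonneg_right hsq h2
      _ = μ := by field_simp
      _ ≤ ε := by linarith

/-- if `f` is continuous on the nonnegative orthant and twice continuously
differentiable on its interior (with gradient `gradf` and Hessian `hessf` there),
and `xstar ≥ 0` is a local minimizer of `f` over the nonnegative orthant, then there exist
sequences `xs > 0` with `xs → xstar`, `ss ≥ 0`, `θs ≥ 0`, and scalars `δs > 0` with `δs → 0`
such that `∇f(xᵏ) − sᵏ → 0`, `min(xᵢᵏ,1)·sᵢᵏ → 0` for each `i`,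
`∇²f(xᵏ) + diag(θᵏ) + δₖ I ⪰ 0` for all `k`, and `min(xᵢᵏ,1)²·θᵢᵏ → 0` for each `i`. -/
theorem stmt0 {n : ℕ}
    (f : (Fin n → ℝ) → ℝ)
    (gradf : (Fin n → ℝ) → (Fin n → ℝ))
    (hessf : (Fin n → ℝ) → Matrix (Fin n) (Fin n) ℝ)
    (hcont : ContinuousOn f {x : Fin n → ℝ | ∀ i, 0 ≤ x i})
    (hgrad : ∀ y : Fin n → ℝ, (∀ i, 0 < y i) → HasFDerivAt f (dotCLM (gradf y)) y)
    (hhess : ∀ y : Fin n → ℝ, (∀ i, 0 < y i) → HasFDerivAt gradf (mulVecCLM (hessf y)) y)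
    (hhesscont : ContinuousOn hessf {x : Fin n → ℝ | ∀ i, 0 < x i})
    (xstar : Fin n → ℝ) (hxstar : ∀ i, 0 ≤ xstar i)
    (hmin : IsLocalMinOn f {x : Fin n → ℝ | ∀ i, 0 ≤ x i} xstar) :
    ∃ (xs ss θs : ℕ → Fin n → ℝ) (δs : ℕ → ℝ),
      (∀ k i, 0 < xs k i) ∧
      Tendsto xs atTop (𝓝 xstar) ∧
      (∀ k i, 0 ≤ ss k i) ∧
      (∀ k i, 0 ≤ θs k i) ∧
      (∀ k, 0 < δs k) ∧
      Tendsto δs atTop (𝓝 0) ∧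
      Tendsto (fun k => gradf (xs k) - ss k) atTop (𝓝 (0 : Fin n → ℝ)) ∧
      (∀ i, Tendsto (fun k => min (xs k i) 1 * ss k i) atTop (𝓝 (0 : ℝ))) ∧
      (∀ k, ∀ v : Fin n → ℝ,
        0 ≤ v ⬝ᵥ ((hessf (xs k) + Matrix.diagonal (θs k)
          + δs k • (1 : Matrix (Fin n) (Fin n) ℝ)) *ᵥ v)) ∧
      (∀ i, Tendsto (fun k => (min (xs k i) 1)^2 * θs k i) atTop (𝓝 (0 : ℝ))) := by

  have hk : ∀ k : ℕ, ∃ (x s θ : Fin n → ℝ) (δ : ℝ),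
      (∀ i, 0 < x i) ∧ ‖x - xstar‖ ≤ 1/((k:ℝ)+1) ∧ (∀ i, 0 ≤ s i) ∧ (∀ i, 0 ≤ θ i) ∧
      0 < δ ∧ δ ≤ 1/((k:ℝ)+1) ∧ ‖gradf x - s‖ ≤ 1/((k:ℝ)+1) ∧
      (∀ i, min (x i) 1 * s i ≤ 1/((k:ℝ)+1)) ∧
      (∀ v : Fin n → ℝ, 0 ≤ v ⬝ᵥ ((hessf x + Matrix.diagonal θ
        + δ • (1 : Matrix (Fin n) (Fin n) ℝ)) *ᵥ v)) ∧
      (∀ i, (min (x i) 1)^2 * θ i ≤ 1/((k:ℝ)+1)) := by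
    intro k
    have h1 : (0:ℝ) < 1/((k:ℝ)+1) := by positivity
    have h2 : 1/((k:ℝ)+1) ≤ 1 := by
      rw [div_le_one (by positivity)]
      have : (0:ℝ) ≤ (k:ℝ) := Nat.cast_nonneg k
      linarith
    exact key f gradf hessf hcont hgrad hhess xstar hxstar hmin _ h1 h2
  choose xs ss θs δs hpos hxnorm hsnn hθnn hδpos hδle hgnorm hmins hpsd hminθ using hk
  have htend : Tendsto (fun k : ℕ => 1/((k:ℝ)+1)) atTop (𝓝 0) :=
    tendsto_one_div_add_atTop_nhds_zero_nat
  refine ⟨xs, ss, θs, δs, hpos, ?_, hsnn, hθnn, hδpos, ?_, ?_, ?_, hpsd, ?_⟩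
  · rw [tendsto_iff_norm_sub_tendsto_zero]
    exact squeeze_zero (fun k => norm_nonneg _) hxnorm htend
  · exact squeeze_zero (fun k => le_of_lt (hδpos k)) hδle htend
  · rw [tendsto_zero_iff_norm_tendsto_zero]
    exact squeeze_zero (fun k => norm_nonneg _) hgnorm htend
  · intro i
    apply squeeze_zero (fun k => ?_) (fun k => hmins k i) htend
    have h0 : 0 ≤ min (xs k i) 1 := le_min (le_of_lt (hpos k i)) zero_le_one
    exact mul_nonneg h0 (hsnn k i)
  · intro i
    apply squeeze_zero (fun k => ?_) (fun k => hminθ k i) htend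
    have h0 : 0 ≤ min (xs k i) 1 := le_min (le_of_lt (hpos k i)) zero_le_one
    exact mul_nonneg (by positivity) (hθnn k i)
end

section
/- Let x ∈ ℝⁿ with x > 0 componentwise, let g ∈ ℝⁿ and let H be a symmetric n×n real matrix, and let εg > 0 and εH > 0. Suppose that (i) g ≥ −εg·e componentwise, (ii) ‖X̄g‖∞ ≤ εg, and (iii) X̄HX̄ + εH·I is positive semidefinite. Then there exist vectors s ∈ ℝⁿ and θ ∈ ℝⁿ with s ≥ 0 and θ ≥ 0 componentwise such that: (a) ‖g − s‖∞ ≤ εg; (b) ‖X̄s‖∞ ≤ εg; (c) H + diag(θ) + εH·I is positive semidefinite; and (d) ‖X̄²θ‖∞ ≤ εH. -/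
open Matrix

/-- for `x > 0`, `g` and symmetric `H` satisfying the approximate optimality
conditions `g ≥ −εg e`, `‖X̄g‖∞ ≤ εg`, `X̄HX̄ + εH I ⪰ 0`, there exist nonnegative
multipliers `s, θ` with `‖g − s‖∞ ≤ εg`, `‖X̄s‖∞ ≤ εg`, `H + diag(θ) + εH I ⪰ 0`, and
`‖X̄²θ‖∞ ≤ εH`. Here `X̄ = diag(min(xᵢ,1))`, `‖·‖` on `Fin n → ℝ` is the max-norm, and
positive semidefiniteness is expressed via the quadratic form. -/
theorem stmt1 {n : ℕ} (x g : Fin n → ℝ) (H : Matrix (Fin n) (Fin n) ℝ) (hH : H.IsSymm)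
    (εg εH : ℝ) (hεg : 0 < εg) (hεH : 0 < εH)
    (hx : ∀ i, 0 < x i)
    (h1 : ∀ i, -εg ≤ g i)
    (h2 : ‖(fun i => min (x i) 1 * g i : Fin n → ℝ)‖ ≤ εg)
    (h3 : ∀ v : Fin n → ℝ,
      0 ≤ v ⬝ᵥ ((Matrix.diagonal (fun i => min (x i) 1) * H
          * Matrix.diagonal (fun i => min (x i) 1)
          + εH • (1 : Matrix (Fin n) (Fin n) ℝ)) *ᵥ v)) :
    ∃ s θ : Fin n → ℝ,
      (∀ i, 0 ≤ s i) ∧ (∀ i, 0 ≤ θ i) ∧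
      ‖g - s‖ ≤ εg ∧
      ‖(fun i => min (x i) 1 * s i : Fin n → ℝ)‖ ≤ εg ∧
      (∀ v : Fin n → ℝ,
        0 ≤ v ⬝ᵥ ((H + Matrix.diagonal θ + εH • (1 : Matrix (Fin n) (Fin n) ℝ)) *ᵥ v)) ∧
      ‖(fun i => (min (x i) 1)^2 * θ i : Fin n → ℝ)‖ ≤ εH := by
  set xb : Fin n → ℝ := fun i => min (x i) 1 with hxbdef
  have hxbpos : ∀ i, 0 < xb i := fun i => lt_min (hx i) one_pos
  have hxbne : ∀ i, xb i ≠ 0 := fun i => (hxbpos i).ne'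
  have hxble : ∀ i, xb i ≤ 1 := fun i => min_le_right _ _
  refine ⟨fun i => max (g i) 0, fun i => εH * (1 / (xb i) ^ 2 - 1),
    fun i => le_max_right _ _, ?_, ?_, ?_, ?_, ?_⟩
  · intro i
    have hle : xb i ^ 2 ≤ 1 := by nlinarith [hxbpos i, hxble i]
    have hp : (0:ℝ) < xb i ^ 2 := pow_pos (hxbpos i) 2
    have : (1 : ℝ) ≤ 1 / xb i ^ 2 := by
      rw [le_div_iff₀ hp]; simpa using hle
    nlinarith
  · rw [pi_norm_le_iff_of_nonneg hεg.le]
    intro i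
    simp only [Pi.sub_apply, Real.norm_eq_abs, abs_le]
    constructor
    · have := h1 i
      have : g i - max (g i) 0 ≥ g i - max (g i) 0 := le_refl _
      rcases le_or_gt (g i) 0 with h | h
      · simp [max_eq_right h]; linarith [h1 i]
      · simp [max_eq_left h.le]; linarith
    · rcases le_or_gt (g i) 0 with h | h
      · simp [max_eq_right h]; linarith
      · simp [max_eq_left h.le]; linarith
  · rw [pi_norm_le_iff_of_nonneg hεg.le]
    intro i
    have hb : ‖xb i * g i‖ ≤ εg := (norm_le_pi_norm (fun i => xb i * g i) i).trans h2
    rw [Real.norm_eq_abs] at hb ⊢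
    rcases le_or_gt (g i) 0 with h | h
    · simp [max_eq_right h]; linarith
    · have hm : max (g i) 0 = g i := max_eq_left h.le
      simp only [hm]
      exact hb
  · intro v
    have key := h3 (fun i => v i / xb i)
    have hDv : (Matrix.diagonal xb) *ᵥ (fun i => v i / xb i) = v := by
      funext i
      simp only [Matrix.mulVec_diagonal]
      rw [mul_comm, div_mul_cancel₀ _ (hxbne i)]
    have expand :
        (fun i => v i / xb i) ⬝ᵥ ((Matrix.diagonal xb * H * Matrix.diagonal xb
            + εH • (1 : Matrix (Fin n) (Fin n) ℝ)) *ᵥ (fun i => v i / xb i))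
        = v ⬝ᵥ ((H + Matrix.diagonal (fun i => εH * (1 / (xb i) ^ 2 - 1))
            + εH • (1 : Matrix (Fin n) (Fin n) ℝ)) *ᵥ v) := by
      rw [Matrix.add_mulVec, Matrix.add_mulVec, Matrix.add_mulVec,
        ← Matrix.mulVec_mulVec, ← Matrix.mulVec_mulVec, hDv]
      simp only [dotProduct_add, Matrix.smul_mulVec, Matrix.one_mulVec,
        dotProduct_smul, smul_eq_mul]
      have h1' : (fun i => v i / xb i) ⬝ᵥ (Matrix.diagonal xb *ᵥ (H *ᵥ v))
          = v ⬝ᵥ (H *ᵥ v) := by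
        simp only [dotProduct, Matrix.mulVec_diagonal]
        refine Finset.sum_congr rfl fun i _ => ?_
        field_simp [hxbne i]
      have h2' : (fun i => v i / xb i) ⬝ᵥ (fun i => v i / xb i)
          = v ⬝ᵥ (Matrix.diagonal (fun i => 1 / (xb i) ^ 2 - 1) *ᵥ v) + v ⬝ᵥ v := by
        simp only [dotProduct, Matrix.mulVec_diagonal, ← Finset.sum_add_distrib]
        refine Finset.sum_congr rfl fun i _ => ?_
        have := hxbne i
        field_simp
        ring
      rw [h1', h2']
      have h3' : v ⬝ᵥ (Matrix.diagonal (fun i => εH * (1 / (xb i) ^ 2 - 1)) *ᵥ v)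
          = εH * (v ⬝ᵥ (Matrix.diagonal (fun i => 1 / (xb i) ^ 2 - 1) *ᵥ v)) := by
        simp only [dotProduct, Matrix.mulVec_diagonal, Finset.mul_sum]
        refine Finset.sum_congr rfl fun i _ => ?_
        ring
      rw [h3']
      ring
    rw [← expand]
    exact key
  · rw [pi_norm_le_iff_of_nonneg hεH.le]
    intro i
    have hb : xb i ^ 2 ≤ 1 := by nlinarith [hxbpos i, hxble i]
    have hpos : 0 < xb i ^ 2 := pow_pos (hxbpos i) 2
    have : xb i ^ 2 * (εH * (1 / xb i ^ 2 - 1)) = εH * (1 - xb i ^ 2) := by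
      field_simp [hxbne i]
    rw [Real.norm_eq_abs, this, abs_le]
    constructor <;> nlinarith
end

section
/- Let x ∈ ℝⁿ with x > 0 componentwise, let g ∈ ℝⁿ, let εg > 0 and set μ = εg/4. If either there exists a coordinate i with gᵢ < −εg, or ‖X̄g‖∞ > εg, then ‖X̄g − μ·X̄X⁻¹e‖ ≥ μ, where ‖·‖ denotes the Euclidean norm. -/
open Matrix

/-- The Euclidean norm of a vector in `Fin n → ℝ`. -/
noncomputable def euclNorm {n : ℕ} (v : Fin n → ℝ) : ℝ := Real.sqrt (∑ i, (v i)^2)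

/-- for `x > 0`, `g ∈ ℝⁿ`, `εg > 0` and `μ = εg/4`, if some coordinate
satisfies `gᵢ < −εg` or `‖X̄g‖∞ > εg`, then `‖X̄g − μ X̄X⁻¹e‖ ≥ μ` in the Euclidean
norm. The `i`-th component of `X̄g − μ X̄X⁻¹e` is `min(xᵢ,1)·gᵢ − μ·min(xᵢ,1)/xᵢ`,
and `‖·‖` on `Fin n → ℝ` is the max-norm. -/
theorem stmt2 {n : ℕ} (x g : Fin n → ℝ) (hx : ∀ i, 0 < x i)
    (εg : ℝ) (hεg : 0 < εg) (μ : ℝ) (hμ : μ = εg / 4)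
    (h : (∃ i, g i < -εg) ∨ εg < ‖(fun i => min (x i) 1 * g i : Fin n → ℝ)‖) :
    μ ≤ euclNorm (fun i => min (x i) 1 * g i - μ * (min (x i) 1 / x i)) := by
  have hμpos : 0 < μ := by rw [hμ]; linarith
  -- reduce to a single coordinate bound
  suffices hex : ∃ i, μ ≤ |min (x i) 1 * g i - μ * (min (x i) 1 / x i)| by
    obtain ⟨i, hi⟩ := hex
    refine hi.trans ?_
    unfold euclNorm
    have h1 : |min (x i) 1 * g i - μ * (min (x i) 1 / x i)| =
        Real.sqrt ((min (x i) 1 * g i - μ * (min (x i) 1 / x i))^2) := by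
      rw [Real.sqrt_sq_eq_abs]
    rw [h1]
    apply Real.sqrt_le_sqrt
    exact Finset.single_le_sum (f := fun j => (min (x j) 1 * g j - μ * (min (x j) 1 / x j))^2)
      (fun j _ => sq_nonneg _) (Finset.mem_univ i)
  have key : ∀ i, 0 < min (x i) 1 ∧ min (x i) 1 ≤ 1 ∧ min (x i) 1 / x i ≤ 1 ∧
      0 < min (x i) 1 / x i := fun i => by
    have hxi := hx i
    refine ⟨lt_min hxi one_pos, min_le_right _ _, ?_, div_pos (lt_min hxi one_pos) hxi⟩
    rw [div_le_one hxi]; exact min_le_left _ _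
  rcases h with ⟨i, hi⟩ | hnorm
  · refine ⟨i, ?_⟩
    obtain ⟨hm0, hm1, hd1, hd0⟩ := key i
    have h2 : min (x i) 1 * g i - μ * (min (x i) 1 / x i) < -μ * (min (x i) 1 / x i) := by
      nlinarith
    -- split on x i ≤ 1 or not
    have hcomp : min (x i) 1 * g i - μ * (min (x i) 1 / x i) ≤ -μ := by
      rcases le_or_gt (x i) 1 with hle | hlt
      · have hmin : min (x i) 1 = x i := min_eq_left hle
        have hdd : x i / x i = 1 := div_self (hx i).ne'
        rw [hmin, hdd]
        nlinarith [hx i]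
      · have hmin : min (x i) 1 = 1 := min_eq_right hlt.le
        have hμεg : μ ≤ εg := by rw [hμ]; linarith
        have hd0' : 0 < 1 / x i := by positivity
        have hd1' : 1 / x i ≤ 1 := by
          rw [div_le_one (hx i)]; exact hlt.le
        rw [hmin]
        nlinarith
    calc μ ≤ -(min (x i) 1 * g i - μ * (min (x i) 1 / x i)) := by linarith
      _ ≤ |min (x i) 1 * g i - μ * (min (x i) 1 / x i)| := neg_le_abs _
  · -- some coordinate has |min * g| > εg
    have hex : ∃ i, εg < |min (x i) 1 * g i| := by
      by_contra hc
      push_neg at hc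
      have : ‖(fun i => min (x i) 1 * g i : Fin n → ℝ)‖ ≤ εg := by
        apply pi_norm_le_iff_of_nonneg hεg.le |>.mpr
        intro i
        rw [Real.norm_eq_abs]; exact hc i
      linarith
    obtain ⟨i, hi⟩ := hex
    refine ⟨i, ?_⟩
    obtain ⟨hm0, hm1, hd1, hd0⟩ := key i
    have hμd : |μ * (min (x i) 1 / x i)| ≤ μ := by
      rw [abs_of_pos (by positivity)]; nlinarith
    have : εg - μ ≤ |min (x i) 1 * g i - μ * (min (x i) 1 / x i)| := by
      have := abs_sub_abs_le_abs_sub (min (x i) 1 * g i) (μ * (min (x i) 1 / x i))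
      linarith
    have : μ ≤ εg - μ := by rw [hμ]; linarith
    linarith
end

section
/- Let β ∈ [0, 1) and let y ∈ ℝ satisfy |y| ≤ β. Then −log(1 + y) ≤ −y + y²/2 + |y|³·(2 − β)/(6(1 − β)²). -/
/-- For `x ≥ 0`, `x - x²/2 ≤ log (1 + x)`. -/
lemma auxA (x : ℝ) (hx : 0 ≤ x) : x - x^2/2 ≤ Real.log (1 + x) := by
  set f : ℝ → ℝ := fun t => Real.log (1 + t) - t + t^2/2 with hf
  have hder : ∀ t ∈ Set.Ici (0:ℝ), HasDerivAt f (1/(1+t) - 1 + t) t := by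
    intro t ht
    have h1 : (0:ℝ) < 1 + t := by simp at ht; linarith
    have hlog : HasDerivAt (fun t : ℝ => Real.log (1 + t)) (1/(1+t)) t := by
      have h := (Real.hasDerivAt_log (ne_of_gt h1)).comp t
        ((hasDerivAt_id t).const_add 1)
      simpa [one_div, Function.comp_def] using h
    have hpoly : HasDerivAt (fun t : ℝ => t^2/2) t t := by
      simpa using (hasDerivAt_pow 2 t).div_const 2
    exact (hlog.sub (hasDerivAt_id t)).add hpoly
  have hmono : MonotoneOn f (Set.Ici 0) := by
    apply monotoneOn_of_deriv_nonneg (convex_Ici 0)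
    · exact fun t ht => ((hder t ht).continuousAt).continuousWithinAt
    · intro t ht
      rw [interior_Ici] at ht
      exact ((hder t (Set.mem_Ici.mpr (le_of_lt ht))).differentiableAt).differentiableWithinAt
    · intro t ht
      rw [interior_Ici] at ht
      rw [(hder t (Set.mem_Ici.mpr (le_of_lt ht))).deriv]
      have h1 : (0:ℝ) < 1 + t := by linarith [(Set.mem_Ioi.mp ht).le]
      have key : 1/(1+t) - 1 + t = t^2/(1+t) := by field_simp; ring
      rw [key]; positivity
  have h0 : f 0 = 0 := by simp [hf]
  have := hmono (Set.self_mem_Ici) (Set.mem_Ici.mpr hx) hx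
  rw [h0] at this
  simp only [hf] at this
  linarith

/-- For `0 ≤ x ≤ β < 1`, `-x - x²/2 - x³/(3(1-β)) ≤ log (1 - x)`. -/
lemma auxB (β x : ℝ) (hβ1 : β < 1) (hx0 : 0 ≤ x) (hxβ : x ≤ β) :
    -x - x^2/2 - x^3/(3*(1-β)) ≤ Real.log (1 - x) := by
  have hb : (0:ℝ) < 1 - β := by linarith
  set f : ℝ → ℝ := fun t => Real.log (1 - t) + t + t^2/2 + t^3/(3*(1-β)) with hf
  have hder : ∀ t ∈ Set.Icc (0:ℝ) β,
      HasDerivAt f (-(1/(1-t)) + 1 + t + t^2/(1-β)) t := by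
    intro t ht
    obtain ⟨ht0, htβ⟩ := ht
    have h1 : (0:ℝ) < 1 - t := by linarith
    have hlog : HasDerivAt (fun t : ℝ => Real.log (1 - t)) (-(1/(1-t))) t := by
      have h := (Real.hasDerivAt_log (ne_of_gt h1)).comp t
        ((hasDerivAt_id t).const_sub 1)
      simpa [one_div, Function.comp_def] using h
    have hp2 : HasDerivAt (fun t : ℝ => t^2/2) t t := by
      simpa using (hasDerivAt_pow 2 t).div_const 2
    have hp3 : HasDerivAt (fun t : ℝ => t^3/(3*(1-β))) (t^2/(1-β)) t := by
      have h := (hasDerivAt_pow 3 t).div_const (3*(1-β))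
      have : (3:ℝ) * t^(3-1) / (3*(1-β)) = t^2/(1-β) := by
        field_simp
      simpa [this] using h
    exact ((hlog.add (hasDerivAt_id t)).add hp2).add hp3
  have hmono : MonotoneOn f (Set.Icc 0 β) := by
    apply monotoneOn_of_deriv_nonneg (convex_Icc 0 β)
    · exact fun t ht => ((hder t ht).continuousAt).continuousWithinAt
    · intro t ht
      rw [interior_Icc] at ht
      exact ((hder t ⟨ht.1.le, ht.2.le⟩).differentiableAt).differentiableWithinAt
    · intro t ht
      rw [interior_Icc] at ht
      obtain ⟨ht0, htβ⟩ := ht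
      rw [(hder t ⟨ht0.le, htβ.le⟩).deriv]
      have h1 : (0:ℝ) < 1 - t := by linarith
      have key : -(1/(1-t)) + 1 + t = -(t^2/(1-t)) := by
        field_simp; ring
      rw [key]
      have h2 : t^2/(1-t) ≤ t^2/(1-β) := by
        apply div_le_div_of_nonneg_left (sq_nonneg t) hb
        linarith
      linarith
  have h0 : f 0 = 0 := by simp [hf]
  have hmem : x ∈ Set.Icc (0:ℝ) β := ⟨hx0, hxβ⟩
  have := hmono (Set.left_mem_Icc.mpr (le_trans hx0 hxβ)) hmem hx0
  rw [h0] at this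
  simp only [hf] at this
  linarith

/-- for `β ∈ [0,1)` and `|y| ≤ β`,
`−log(1+y) ≤ −y + y²/2 + |y|³(2−β)/(6(1−β)²)`. -/
theorem stmt3 (β y : ℝ) (hβ : β ∈ Set.Ico (0:ℝ) 1) (hy : |y| ≤ β) :
    -Real.log (1 + y) ≤ -y + y^2/2 + |y|^3 * (2 - β) / (6 * (1 - β)^2) := by
  obtain ⟨hβ0, hβ1⟩ := hβ
  have hb : (0:ℝ) < 1 - β := by linarith
  rcases le_or_gt 0 y with h | h
  · have h1 := auxA y h
    have h2 : 0 ≤ |y|^3 * (2 - β) / (6 * (1 - β)^2) := by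
      apply div_nonneg _ (by positivity)
      apply mul_nonneg (by positivity) (by linarith)
    linarith
  · have hx0 : 0 ≤ -y := by linarith
    have hxβ : -y ≤ β := by rw [abs_of_neg h] at hy; exact hy
    have h1 := auxB β (-y) hβ1 hx0 hxβ
    have h2 : 1 - (-y) = 1 + y := by ring
    rw [h2] at h1
    have hay : |y| = -y := abs_of_neg h
    have h3 : |y|^3/(3*(1-β)) ≤ |y|^3 * (2 - β) / (6 * (1 - β)^2) := by
      rw [div_le_div_iff₀ (by positivity) (by positivity)]
      nlinarith [mul_nonneg (mul_nonneg (pow_nonneg (abs_nonneg y) 3) hb.le) hβ0]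
    have h4 : -Real.log (1 + y) ≤ -y + y^2/2 + |y|^3/(3*(1-β)) := by
      rw [hay]; nlinarith
    linarith
end

section
/- Let x ∈ ℝⁿ with x > 0 componentwise, let β ∈ [0, 1), and let d ∈ ℝⁿ satisfy ‖X⁻¹X̄d‖∞ ≤ β. Then −Σᵢ log(xᵢ + x̄ᵢdᵢ) + Σᵢ log(xᵢ) ≤ −eᵀX⁻¹X̄d + (1/2)·dᵀX̄X⁻²X̄d + ((2 − β)/(6(1 − β)²))·‖d‖³, where ‖·‖ denotes the Euclidean norm. -/
lemma lemA (t : ℝ) (ht : 0 ≤ t) : t - t^2/2 ≤ Real.log (1+t) := by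
  set f : ℝ → ℝ := fun s => Real.log (1+s) - (s - s^2/2) with hf
  have hder : ∀ s ∈ interior (Set.Ici (0:ℝ)), HasDerivAt f (1/(1+s) - (1 - s)) s := by
    intro s hs
    rw [interior_Ici] at hs
    have h1 : (0:ℝ) < 1 + s := by linarith [Set.mem_Ioi.mp hs]
    have h2 : HasDerivAt (fun s : ℝ => 1 + s) 1 s := by
      simpa using (hasDerivAt_id s).const_add 1
    have h3 : HasDerivAt (fun s : ℝ => Real.log (1+s)) (1/(1+s)) s := by
      simpa [Function.comp_def] using (Real.hasDerivAt_log h1.ne').comp s h2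
    have h4 : HasDerivAt (fun s : ℝ => s - s^2/2) (1 - s) s := by
      have h5 := (hasDerivAt_id s).sub ((hasDerivAt_pow 2 s).div_const 2)
      exact h5.congr_deriv (by push_cast; ring)
    exact h3.sub h4
  have hmono : MonotoneOn f (Set.Ici 0) := by
    apply monotoneOn_of_deriv_nonneg (convex_Ici 0)
    · apply ContinuousOn.sub
      · apply ContinuousOn.log (by fun_prop)
        intro s hs; have := Set.mem_Ici.mp hs; positivity
      · fun_prop
    · intro s hs; exact (hder s hs).differentiableAt.differentiableWithinAt
    · intro s hs
      rw [(hder s hs).deriv]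
      rw [interior_Ici] at hs
      have h1 : (0:ℝ) < 1 + s := by linarith [Set.mem_Ioi.mp hs]
      have he : 1/(1+s) - (1 - s) = s^2/(1+s) := by field_simp; ring
      rw [he]; positivity
  have hm := hmono (Set.self_mem_Ici) (Set.mem_Ici.mpr ht) ht
  simp only [hf] at hm
  simp at hm
  linarith

lemma lemB (β t : ℝ) (hβ1 : β < 1) (ht1 : -β ≤ t) (ht2 : t ≤ 0) :
    -Real.log (1+t) ≤ -t + t^2/2 - t^3/(3*(1-β)) := by
  have hβt : (0:ℝ) < 1 - β := by linarith
  set g : ℝ → ℝ := fun s => -s^3/(3*(1-β)) + s^2/2 - s + Real.log (1+s) with hg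
  have hpos : ∀ s ∈ Set.Icc (-β) 0, (0:ℝ) < 1 + s := by
    intro s hs; have := hs.1; linarith
  have hder : ∀ s ∈ interior (Set.Icc (-β) 0),
      HasDerivAt g (-(3*s^2)/(3*(1-β)) + s - 1 + 1/(1+s)) s := by
    intro s hs
    rw [interior_Icc] at hs
    have h1 : (0:ℝ) < 1 + s := by linarith [hs.1]
    have h2 : HasDerivAt (fun s : ℝ => 1 + s) 1 s := by
      simpa using (hasDerivAt_id s).const_add 1
    have h3 : HasDerivAt (fun s : ℝ => Real.log (1+s)) (1/(1+s)) s := by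
      simpa [Function.comp_def] using (Real.hasDerivAt_log h1.ne').comp s h2
    have h4 : HasDerivAt (fun s : ℝ => -s^3/(3*(1-β))) (-(3*s^2)/(3*(1-β))) s := by
      have h4' := ((hasDerivAt_pow 3 s).neg.div_const (3*(1-β)))
      exact h4'.congr_deriv (by push_cast; ring)
    have h5 : HasDerivAt (fun s : ℝ => s^2/2) s s := by
      have h5' := ((hasDerivAt_pow 2 s).div_const 2)
      exact h5'.congr_deriv (by push_cast; ring)
    exact ((h4.add h5).sub (hasDerivAt_id s)).add h3
  have hanti : AntitoneOn g (Set.Icc (-β) 0) := by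
    apply antitoneOn_of_deriv_nonpos (convex_Icc _ _)
    · apply ContinuousOn.add (by fun_prop)
      apply ContinuousOn.log (by fun_prop)
      intro s hs; exact (hpos s hs).ne'
    · intro s hs; exact (hder s hs).differentiableAt.differentiableWithinAt
    · intro s hs
      rw [(hder s hs).deriv]
      rw [interior_Icc] at hs
      have h1 : (0:ℝ) < 1 + s := by linarith [hs.1]
      have he : -(3*s^2)/(3*(1-β)) + s - 1 + 1/(1+s) = s^2/(1+s) - s^2/(1-β) := by
        field_simp; ring
      rw [he]
      have hle : s^2/(1+s) ≤ s^2/(1-β) :=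
        div_le_div_of_nonneg_left (sq_nonneg s) hβt (by linarith [hs.1])
      linarith
  have h0 : g 0 ≤ g t := hanti (Set.mem_Icc.mpr ⟨ht1, ht2⟩)
    (Set.mem_Icc.mpr ⟨by linarith, le_refl 0⟩) ht2
  simp only [hg] at h0
  norm_num at h0
  rw [neg_div] at h0
  linarith

lemma keyScalar (β t : ℝ) (hβ0 : 0 ≤ β) (hβ1 : β < 1) (ht : |t| ≤ β) :
    -Real.log (1+t) ≤ -t + t^2/2 + (2-β)/(6*(1-β)^2) * |t|^3 := by
  have hC : 0 ≤ (2-β)/(6*(1-β)^2) := by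
    apply div_nonneg (by linarith)
    positivity
  rcases le_or_gt 0 t with h | h
  · have := lemA t h
    have habs : 0 ≤ |t|^3 := by positivity
    nlinarith [mul_nonneg hC habs]
  · have ht1 : -β ≤ t := by
      rw [abs_of_neg h] at ht; linarith
    have := lemB β t hβ1 ht1 h.le
    have habs : |t|^3 = -t^3 := by
      rw [abs_of_neg h]; ring
    rw [habs]
    have hkey : -t^3/(3*(1-β)) ≤ (2-β)/(6*(1-β)^2) * (-t^3) := by
      have h1β : (0:ℝ) < 1 - β := by linarith
      rw [div_mul_eq_mul_div, div_le_div_iff₀ (by linarith) (mul_pos (by norm_num) (pow_pos h1β 2))]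
      have h3 : 0 ≤ -t^3 := by nlinarith
      nlinarith [mul_nonneg h3 hβ0, sq_nonneg (1-β)]
    rw [neg_div] at hkey
    linarith

open Matrix

/-- for `x > 0`, `β ∈ [0,1)` and `d` with `‖X⁻¹X̄d‖∞ ≤ β`,
`−Σᵢ log(xᵢ + x̄ᵢdᵢ) + Σᵢ log xᵢ ≤ −eᵀX⁻¹X̄d + ½ dᵀX̄X⁻²X̄d + ((2−β)/(6(1−β)²))‖d‖³`,
where `x̄ᵢ = min(xᵢ,1)`, `eᵀX⁻¹X̄d = Σᵢ (x̄ᵢ/xᵢ)dᵢ`, `dᵀX̄X⁻²X̄d = Σᵢ (x̄ᵢ/xᵢ)² dᵢ²`,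
`‖·‖` on `Fin n → ℝ` is the max-norm, and `euclNorm` is the Euclidean norm. -/
theorem stmt5 {n : ℕ} (x d : Fin n → ℝ) (hx : ∀ i, 0 < x i)
    (β : ℝ) (hβ : β ∈ Set.Ico (0:ℝ) 1)
    (hd : ‖(fun i => (min (x i) 1 / x i) * d i : Fin n → ℝ)‖ ≤ β) :
    -∑ i, Real.log (x i + min (x i) 1 * d i) + ∑ i, Real.log (x i) ≤
      -∑ i, (min (x i) 1 / x i) * d i
      + (1/2) * ∑ i, (min (x i) 1 / x i)^2 * (d i)^2
      + ((2 - β) / (6 * (1 - β)^2)) * euclNorm d ^ 3 := by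
  obtain ⟨hβ0, hβ1⟩ := hβ
  set t : Fin n → ℝ := fun i => min (x i) 1 / x i * d i with htdef
  have ht_abs : ∀ i, |t i| ≤ β := by
    intro i
    have := norm_le_pi_norm (fun i => min (x i) 1 / x i * d i : Fin n → ℝ) i
    simp only [Real.norm_eq_abs] at this
    exact this.trans hd
  have h1t : ∀ i, 0 < 1 + t i := by
    intro i
    have := abs_le.mp (ht_abs i)
    linarith [this.1]
  have hC : 0 ≤ (2-β)/(6*(1-β)^2) := by
    apply div_nonneg (by linarith)
    have h1β : (0:ℝ) < 1 - β := by linarith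
    positivity
  -- rewrite the log terms
  have hsplit : ∀ i, Real.log (x i + min (x i) 1 * d i)
      = Real.log (x i) + Real.log (1 + t i) := by
    intro i
    have hxne : x i ≠ 0 := (hx i).ne'
    have heq : x i + min (x i) 1 * d i = x i * (1 + t i) := by
      simp only [htdef]
      field_simp
    rw [heq, Real.log_mul hxne (h1t i).ne']
  -- Euclidean norm facts
  set N := euclNorm d with hNdef
  have hN0 : 0 ≤ N := Real.sqrt_nonneg _
  have hNsq : N^2 = ∑ i, (d i)^2 := by
    rw [hNdef, euclNorm, Real.sq_sqrt]
    positivity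
  have hdi : ∀ i, |d i| ≤ N := by
    intro i
    rw [hNdef, euclNorm, ← Real.sqrt_sq_eq_abs]
    apply Real.sqrt_le_sqrt
    exact Finset.single_le_sum (fun j _ => sq_nonneg (d j)) (Finset.mem_univ i)
  have hti_le : ∀ i, |t i| ≤ |d i| := by
    intro i
    simp only [htdef, abs_mul]
    have hm : 0 < min (x i) 1 := lt_min (hx i) one_pos
    have h1 : |min (x i) 1 / x i| ≤ 1 := by
      rw [abs_of_nonneg (le_of_lt (div_pos hm (hx i)))]
      rw [div_le_one (hx i)]
      exact min_le_left _ _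
    nlinarith [abs_nonneg (d i)]
  have hcube : ∑ i, |t i|^3 ≤ N^3 := by
    have hbound : ∀ i, |t i|^3 ≤ N * (d i)^2 := by
      intro i
      have h1 : |t i|^3 ≤ |d i|^3 :=
        pow_le_pow_left₀ (abs_nonneg _) (hti_le i) 3
      have h2 : |d i|^3 = |d i| * (d i)^2 := by
        rw [pow_succ' ]
        congr 1
        rw [sq_abs]
      have h3 : |d i| * (d i)^2 ≤ N * (d i)^2 :=
        mul_le_mul_of_nonneg_right (hdi i) (sq_nonneg _)
      linarith
    calc ∑ i, |t i|^3 ≤ ∑ i, N * (d i)^2 :=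
          Finset.sum_le_sum (fun i _ => hbound i)
      _ = N * ∑ i, (d i)^2 := by rw [Finset.mul_sum]
      _ = N * N^2 := by rw [hNsq]
      _ = N^3 := by ring
  -- pointwise scalar inequality
  have hpt : ∀ i, -Real.log (1 + t i) ≤
      -t i + (t i)^2/2 + (2-β)/(6*(1-β)^2) * |t i|^3 :=
    fun i => keyScalar β (t i) hβ0 hβ1 (ht_abs i)
  have hsum : -∑ i, Real.log (1 + t i) ≤
      -∑ i, t i + (1/2) * ∑ i, (t i)^2 + (2-β)/(6*(1-β)^2) * ∑ i, |t i|^3 := by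
    rw [← Finset.sum_neg_distrib]
    calc ∑ i, -Real.log (1 + t i)
        ≤ ∑ i, (-t i + (t i)^2/2 + (2-β)/(6*(1-β)^2) * |t i|^3) :=
          Finset.sum_le_sum (fun i _ => hpt i)
      _ = -∑ i, t i + (1/2) * ∑ i, (t i)^2 + (2-β)/(6*(1-β)^2) * ∑ i, |t i|^3 := by
          have e1 : ∑ i, ((t i)^2/2) = (1/2) * ∑ i, (t i)^2 := by
            rw [Finset.mul_sum]
            exact Finset.sum_congr rfl (fun i _ => by ring)
          have e2 : ∑ i, ((2-β)/(6*(1-β)^2) * |t i|^3)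
              = (2-β)/(6*(1-β)^2) * ∑ i, |t i|^3 := by
            rw [Finset.mul_sum]
          rw [Finset.sum_add_distrib, Finset.sum_add_distrib, Finset.sum_neg_distrib, e1, e2]
  have htsq : ∀ i, (t i)^2 = (min (x i) 1 / x i)^2 * (d i)^2 := by
    intro i; simp only [htdef]; ring
  have hLHS : -∑ i, Real.log (x i + min (x i) 1 * d i) + ∑ i, Real.log (x i)
      = -∑ i, Real.log (1 + t i) := by
    simp only [hsplit, Finset.sum_add_distrib]
    ring
  rw [hLHS]
  have hlast : (2-β)/(6*(1-β)^2) * ∑ i, |t i|^3 ≤ (2-β)/(6*(1-β)^2) * N^3 :=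
    mul_le_mul_of_nonneg_left hcube hC
  have hfin := hsum.trans (by linarith : -∑ i, t i + (1/2) * ∑ i, (t i)^2 + (2-β)/(6*(1-β)^2) * ∑ i, |t i|^3 ≤ -∑ i, t i + (1/2) * ∑ i, (t i)^2 + (2-β)/(6*(1-β)^2) * N^3)
  simp only [htsq] at hfin
  exact hfin
end

section
/- Let f : ℝⁿ → ℝ be twice continuously differentiable with ∇²f Lipschitz continuous with constant L_H in the operator norm. Let εg ∈ (0, 1), set εH = εg^{1/2} and μ = εg/4, and let ζ̄ ∈ (0, 1), ζ_r ∈ (0, 1), and β ∈ [εH, 1). Let x ∈ ℝⁿ with x > 0 componentwise and let d ∈ ℝⁿ satisfy ‖X⁻¹X̄d‖∞ < β. Define the residual r̂ = (X̄(∇²f(x) + μX⁻²)X̄ + 2εH·I)d + X̄(∇f(x) − μX⁻¹e), and suppose that ‖r̂‖∞ ≤ ζ̄μ and ‖r̂‖ ≤ (ζ_r εH/2)‖d‖. Let x⁺ = x + X̄d and let c_d = min{(1 − ζ̄)/9, (3/(2L_H))^{1/2}, 1/(2(L_H + 9/2 + ζ_r))}. Then either ‖d‖ ≥ c_d·εH,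 or both ∇f(x⁺) ≥ −εg·e componentwise and ‖X̄⁺∇f(x⁺)‖∞ ≤ εg, where X̄⁺ = diag(min(x⁺₁,1),…,min(x⁺ₙ,1)). -/
open Matrix

/-- The operator norm (induced by the Euclidean norm) of a matrix. -/
noncomputable def opNorm {n : ℕ} (A : Matrix (Fin n) (Fin n) ℝ) : ℝ :=
  ‖Matrix.toEuclideanCLM (𝕜 := ℝ) A‖

lemma euclNorm_nonneg {n : ℕ} (v : Fin n → ℝ) : 0 ≤ euclNorm v := Real.sqrt_nonneg _

lemma abs_le_euclNorm {n : ℕ} (v : Fin n → ℝ) (i : Fin n) : |v i| ≤ euclNorm v := by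
  rw [← Real.sqrt_sq_eq_abs]
  exact Real.sqrt_le_sqrt (Finset.single_le_sum (fun j _ => sq_nonneg (v j))
    (Finset.mem_univ i))

lemma euclNorm_mono {n : ℕ} {v w : Fin n → ℝ} (h : ∀ i, |v i| ≤ |w i|) :
    euclNorm v ≤ euclNorm w := by
  apply Real.sqrt_le_sqrt
  apply Finset.sum_le_sum
  intro i _
  calc (v i)^2 = |v i|^2 := (sq_abs _).symm
    _ ≤ |w i|^2 := pow_le_pow_left₀ (abs_nonneg _) (h i) 2
    _ = (w i)^2 := sq_abs _

lemma rhat_comp {n : ℕ} (H : Matrix (Fin n) (Fin n) ℝ) (x d : Fin n → ℝ) (μ εH : ℝ)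
    (g : Fin n → ℝ) (rhat : Fin n → ℝ)
    (hrhat : rhat =
      (Matrix.diagonal (fun i => min (x i) 1)
          * (H + μ • Matrix.diagonal (fun i => ((x i)^2)⁻¹))
          * Matrix.diagonal (fun i => min (x i) 1)
        + (2 * εH) • (1 : Matrix (Fin n) (Fin n) ℝ)) *ᵥ d
      + (fun i => min (x i) 1 * (g i - μ / x i))) (i : Fin n) :
    rhat i = min (x i) 1 * ((H *ᵥ (fun j => min (x j) 1 * d j)) i)
      + μ * (min (x i) 1)^2 * ((x i)^2)⁻¹ * d i + 2 * εH * d i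
      + min (x i) 1 * (g i - μ / x i) := by
  subst hrhat
  simp only [Matrix.add_mulVec]
  rw [← Matrix.mulVec_mulVec, ← Matrix.mulVec_mulVec]
  simp only [Matrix.smul_mulVec, Matrix.one_mulVec, Pi.add_apply,
    Pi.smul_apply, Matrix.mulVec_diagonal, smul_eq_mul]
  have h : (Matrix.diagonal (fun i => min (x i) 1) *ᵥ d) = fun j => min (x j) 1 * d j := by
    funext j; rw [Matrix.mulVec_diagonal]
  rw [h]
  simp only [Matrix.add_mulVec, Matrix.smul_mulVec, Pi.add_apply, Pi.smul_apply,
    Matrix.mulVec_diagonal, smul_eq_mul]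
  ring

lemma euclNorm_eq {n : ℕ} (v : Fin n → ℝ) :
    euclNorm v = ‖(WithLp.equiv 2 (Fin n → ℝ)).symm v‖ := by
  rw [EuclideanSpace.norm_eq, euclNorm]
  congr 1
  apply Finset.sum_congr rfl
  intro i _
  rw [Real.norm_eq_abs, sq_abs]
  rfl

lemma taylor {n : ℕ} (g : (Fin n → ℝ) → (Fin n → ℝ)) (Hm : (Fin n → ℝ) → Matrix (Fin n) (Fin n) ℝ)
    (hg : ∀ y, HasFDerivAt g (mulVecCLM (Hm y)) y) (L : ℝ) (hL : 0 ≤ L)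
    (hlip : ∀ y z, opNorm (Hm y - Hm z) ≤ L * euclNorm (y - z)) (x s : Fin n → ℝ) :
    euclNorm (g (x + s) - g x - (Hm x) *ᵥ s) ≤ L * (euclNorm s)^2 := by
  set e := PiLp.continuousLinearEquiv 2 ℝ (fun _ : Fin n => ℝ) with he
  set G : EuclideanSpace ℝ (Fin n) → EuclideanSpace ℝ (Fin n) := fun y => e.symm (g (e y)) with hGdef
  have hG : ∀ y : EuclideanSpace ℝ (Fin n),
      HasFDerivAt G (Matrix.toEuclideanCLM (𝕜 := ℝ) (Hm (e y))) y := by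
    intro y
    have h1 : HasFDerivAt (fun z : EuclideanSpace ℝ (Fin n) => g (e z))
        ((mulVecCLM (Hm (e y))).comp (e : EuclideanSpace ℝ (Fin n) →L[ℝ] (Fin n → ℝ))) y :=
      (hg (e y)).comp y e.hasFDerivAt
    have h2 := (e.symm.hasFDerivAt (x := g (e y))).comp y h1
    rw [show Matrix.toEuclideanCLM (𝕜 := ℝ) (Hm (e y)) = (e.symm : (Fin n → ℝ) →L[ℝ] EuclideanSpace ℝ (Fin n)).comp ((mulVecCLM (Hm (e y))).comp (e : EuclideanSpace ℝ (Fin n) →L[ℝ] (Fin n → ℝ))) from ContinuousLinearMap.ext fun v => rfl]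
    exact h2
  -- now mean value on segment
  set x' : EuclideanSpace ℝ (Fin n) := e.symm x
  set y' : EuclideanSpace ℝ (Fin n) := e.symm (x + s)
  have hseg : Convex ℝ (segment ℝ x' y') := convex_segment _ _
  have hnorm : ‖y' - x'‖ = euclNorm s := by
    rw [euclNorm_eq]
    congr 1
    ext i
    show (x i + s i) - x i = s i
    ring
  have key : ‖G y' - G x' - (Matrix.toEuclideanCLM (𝕜 := ℝ) (Hm x)) (y' - x')‖
      ≤ (L * euclNorm s) * ‖y' - x'‖ := by
    apply Convex.norm_image_sub_le_of_norm_hasFDerivWithin_le'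
      (f' := fun y => Matrix.toEuclideanCLM (𝕜 := ℝ) (Hm (e y))) ?_ ?_ hseg
      (left_mem_segment ℝ x' y') (right_mem_segment ℝ x' y')
    · intro z _; exact (hG z).hasFDerivWithinAt
    · intro z hz
      have hms : (Matrix.toEuclideanCLM (n := Fin n) (𝕜 := ℝ)) (Hm (e z)) - (Matrix.toEuclideanCLM (n := Fin n) (𝕜 := ℝ)) (Hm x) = (Matrix.toEuclideanCLM (n := Fin n) (𝕜 := ℝ)) (Hm (e z) - Hm x) := (map_sub (Matrix.toEuclideanCLM (n := Fin n) (𝕜 := ℝ)) _ _).symm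
      show ‖(Matrix.toEuclideanCLM (n := Fin n) (𝕜 := ℝ)) (Hm (e z)) - (Matrix.toEuclideanCLM (n := Fin n) (𝕜 := ℝ)) (Hm x)‖ ≤ L * euclNorm s
      rw [hms]
      calc ‖Matrix.toEuclideanCLM (𝕜 := ℝ) (Hm (e z) - Hm x)‖
          = opNorm (Hm (e z) - Hm x) := rfl
        _ ≤ L * euclNorm (e z - x) := hlip _ _
        _ ≤ L * euclNorm s := by
            apply mul_le_mul_of_nonneg_left _ hL
            have h4 : euclNorm (e z - x) = ‖z - x'‖ := by
              rw [euclNorm_eq]; congr 1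
            rw [h4, ← hnorm]
            obtain ⟨a, b, ha, hb, hab, rfl⟩ := hz
            have h5 : a • x' + b • y' - x' = b • (y' - x') := by
              have : a = 1 - b := by linarith
              rw [this]; module
            rw [h5, norm_smul, Real.norm_eq_abs, abs_of_nonneg hb]
            have hb1 : b ≤ 1 := by linarith
            exact mul_le_of_le_one_left (norm_nonneg _) hb1
  calc euclNorm (g (x + s) - g x - (Hm x) *ᵥ s)
      = ‖G y' - G x' - (Matrix.toEuclideanCLM (n := Fin n) (𝕜 := ℝ)) (Hm x) (y' - x')‖ := by
        rw [euclNorm_eq]; congr 1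
        have hyx : (y' - x' : EuclideanSpace ℝ (Fin n)) = (WithLp.equiv 2 (Fin n → ℝ)).symm s := by
          apply (WithLp.equiv 2 (Fin n → ℝ)).injective
          funext i
          show (x i + s i) - x i = s i
          ring
        rw [hyx]
        rfl
    _ ≤ (L * euclNorm s) * ‖y' - x'‖ := key
    _ = L * (euclNorm s)^2 := by rw [hnorm]; ring

lemma sc_lemA (ζbar cd : ℝ) (h0 : 0 < ζbar) (h1 : ζbar < 1) (hc : 0 < cd) (h9 : cd ≤ 1/9) :
    (1+cd)*(ζbar+1+11*cd) ≤ 4 := by nlinarith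

set_option maxHeartbeats 1000000 in
lemma aux_ineq (εH μ ζbar ζr β L_H cd X a r E gp : ℝ)
    (hX : 0 < X) (hεH : 0 < εH) (hεH1 : εH ≤ 1) (hμ : 4 * μ = εH^2)
    (hζbar0 : 0 < ζbar) (hζbar1 : ζbar < 1) (hζr0 : 0 < ζr) (hζr1 : ζr < 1)
    (hβ1 : β < 1) (hL : 0 < L_H)
    (hcd0 : 0 < cd) (hcd9 : 9 * cd ≤ 1 - ζbar)
    (hcdL : cd * (2 * L_H + 9 + 2 * ζr) ≤ 1)
    (ha : |a| ≤ cd * εH)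
    (hr1 : |r| ≤ ζbar * μ) (hr2 : |r| ≤ 2 * ζr * cd * μ)
    (hE : |E| ≤ 4 * L_H * cd^2 * μ)
    (ht : |min X 1 / X * a| < β)
    (heq : min X 1 * gp =
      r - μ * (min X 1)^2 * (X^2)⁻¹ * a - 2 * εH * a + min X 1 * μ / X + min X 1 * E) :
    -(4*μ) ≤ gp ∧ |min (X + min X 1 * a) 1 * gp| ≤ 4*μ := by
  have hμ0 : 0 < μ := by
    have h : 0 < εH^2 := by positivity
    linarith
  have hcd19 : cd ≤ 1/9 := by linarith
  have ha' : |a| ≤ cd := le_trans ha (mul_le_of_le_one_right hcd0.le hεH1)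
  obtain ⟨ha1, ha2⟩ := abs_le.mp ha'
  obtain ⟨hr1a, hr1b⟩ := abs_le.mp hr1
  obtain ⟨hr2a, hr2b⟩ := abs_le.mp hr2
  obtain ⟨hEa, hEb⟩ := abs_le.mp hE
  obtain ⟨haH1, haH2⟩ := abs_le.mp ha
  have hLcd : 2 * L_H * cd ≤ 1 := by
    have h1 : 0 < cd * ζr := mul_pos hcd0 hζr0
    linarith [hcdL]
  have h4L : 4 * L_H * cd^2 ≤ 2 * L_H * cd := by
    have h := mul_le_mul_of_nonneg_left (show 2*cd ≤ 1 by linarith) (mul_pos hL hcd0).le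
    linarith [h]
  have h4L2 : 4 * L_H * cd^2 ≤ 2 * cd := by
    have h := mul_le_mul_of_nonneg_right hLcd (by linarith : (0:ℝ) ≤ 2*cd)
    linarith [h]
  have hbudget : 2*ζr*cd + 9*cd + 4*L_H*cd^2 ≤ 1 := by linarith [hcdL, h4L]
  have hμa2 : μ * a ≤ μ * cd := mul_le_mul_of_nonneg_left ha2 hμ0.le
  have hμa1 : -(μ * cd) ≤ μ * a := by
    have h := mul_le_mul_of_nonneg_left ha1 hμ0.le
    linarith [h]
  have heq8 : 2*εH*(cd*εH) = 8*(cd*μ) := by linear_combination (-2*cd)*hμ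
  have h2εa2 : 2 * εH * a ≤ 8 * (cd * μ) := by
    have h := mul_le_mul_of_nonneg_left haH2 (by positivity : (0:ℝ) ≤ 2 * εH)
    linarith [h, heq8]
  have h2εa1 : -(8 * (cd * μ)) ≤ 2 * εH * a := by
    have h := mul_le_mul_of_nonneg_left haH1 (by positivity : (0:ℝ) ≤ 2 * εH)
    have h' : 2*εH*(-(cd*εH)) = -(8*(cd*μ)) := by linear_combination (2*cd)*hμ
    linarith [h, h']
  have hμcd19 : μ * cd ≤ μ * (1/9) := mul_le_mul_of_nonneg_left hcd19 hμ0.le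
  have hμ4L2 : μ * (4*L_H*cd^2) ≤ μ * (2*cd) := mul_le_mul_of_nonneg_left h4L2 hμ0.le
  by_cases hX1 : X ≤ 1
  · -- Case A : X ≤ 1, min X 1 = X
    have hm : min X 1 = X := min_eq_left hX1
    rw [hm] at heq ht ⊢
    have hXne : X ≠ 0 := hX.ne'
    have heq' : X * gp = r - μ * a - 2 * εH * a + μ + X * E := by
      rw [heq]
      have h1 : μ * X^2 * (X^2)⁻¹ * a = μ * a := by
        field_simp
      have h2 : X * μ / X = μ := by
        field_simp
      rw [h1, h2]
    have hXE2 : X * E ≤ 4 * L_H * cd^2 * μ := by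
      have h1 := mul_le_mul_of_nonneg_left (le_abs_self E) hX.le
      have h2 := mul_le_of_le_one_left (abs_nonneg E) hX1
      linarith [h1, h2, hE]
    have hXE1 : -(4 * L_H * cd^2 * μ) ≤ X * E := by
      have h1 := mul_le_mul_of_nonneg_left (neg_abs_le E) hX.le
      have h2 := mul_le_of_le_one_left (abs_nonneg E) hX1
      linarith [h1, h2, hE]
    have hμbud : μ * (2*ζr*cd + 9*cd + 4*L_H*cd^2) ≤ μ * 1 :=
      mul_le_mul_of_nonneg_left hbudget hμ0.le
    have hNlow : 0 ≤ X * gp := by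
      rw [heq']
      linarith [hr2a, hμa2, h2εa2, hXE1, hμbud]
    have hgp0 : 0 ≤ gp := by
      by_contra h
      push_neg at h
      linarith [mul_pos hX (neg_pos.mpr h), hNlow]
    have hNup : X * gp ≤ μ * (ζbar + 1 + 11*cd) := by
      rw [heq']
      linarith [hr1b, hμa1, h2εa1, hXE2, hμ4L2]
    constructor
    · linarith
    · have hxp0 : 0 < X + X * a := by
        have h := mul_pos hX (show (0:ℝ) < 1 + a by linarith)
        linarith [h]
      have hmp0 : 0 ≤ min (X + X * a) 1 := le_min hxp0.le zero_le_one
      have hup1 : min (X + X * a) 1 * gp ≤ (X + X * a) * gp :=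
        mul_le_mul_of_nonneg_right (min_le_left _ _) hgp0
      have hup2 : (X + X * a) * gp ≤ (1 + cd) * (μ * (ζbar + 1 + 11*cd)) := by
        have hxa : (X + X * a) * gp = (1 + a) * (X * gp) := by ring
        rw [hxa]
        apply mul_le_mul (by linarith) hNup hNlow (by linarith)
      have hsc : (1+cd)*(ζbar+1+11*cd) ≤ 4 := sc_lemA ζbar cd hζbar0 hζbar1 hcd0 hcd19
      have hup3 : (1 + cd) * (μ * (ζbar + 1 + 11*cd)) ≤ 4 * μ := by
        have h := mul_le_mul_of_nonneg_left hsc hμ0.le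
        linarith [h]
      rw [abs_le]
      exact ⟨by linarith [mul_nonneg hmp0 hgp0, hμ0], by linarith⟩
  · -- Case B : 1 < X, min X 1 = 1
    push_neg at hX1
    have hm : min X 1 = 1 := min_eq_right hX1.le
    rw [hm] at heq ht ⊢
    have hXne : X ≠ 0 := hX.ne'
    have hu0 : 0 < X⁻¹ := inv_pos.mpr hX
    have hu1 : X⁻¹ ≤ 1 := by
      rw [inv_le_one_iff₀]
      right; linarith
    have heq' : gp = r - μ * X⁻¹ * (X⁻¹ * a) - 2 * εH * a + μ * X⁻¹ + E := by
      rw [one_mul] at heq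
      rw [heq]
      have h1 : μ * (1:ℝ)^2 * (X^2)⁻¹ * a = μ * X⁻¹ * (X⁻¹ * a) := by
        rw [one_pow, mul_one, sq, mul_inv]
        ring
      have h2 : 1 * μ / X = μ * X⁻¹ := by
        rw [one_mul, div_eq_mul_inv]
      rw [h1, h2, one_mul]
    set t := X⁻¹ * a with htdef
    have htb : |t| < β := by
      have h : (1:ℝ) / X * a = t := by rw [htdef]; ring
      rwa [h] at ht
    have ht1 : t < 1 := lt_of_le_of_lt (le_abs_self t) (lt_of_lt_of_le htb hβ1.le)
    have htm1 : -1 < t := by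
      have h := neg_abs_le t
      linarith [htb, hβ1]
    have htcd : |t| ≤ cd := by
      calc |t| = |X⁻¹| * |a| := abs_mul _ _
        _ ≤ 1 * cd := mul_le_mul (by rwa [abs_of_pos hu0]) ha' (abs_nonneg a) zero_le_one
        _ = cd := one_mul cd
    obtain ⟨htc1, htc2⟩ := abs_le.mp htcd
    have hμu0 : 0 < μ * X⁻¹ := mul_pos hμ0 hu0
    have hμu1 : μ * X⁻¹ ≤ μ := mul_le_of_le_one_right hμ0.le hu1
    have hmid0 : 0 ≤ μ * X⁻¹ - μ * X⁻¹ * t := by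
      have h := mul_nonneg hμu0.le (by linarith : (0:ℝ) ≤ 1 - t)
      linarith [h]
    have hmid2 : μ * X⁻¹ - μ * X⁻¹ * t ≤ μ * (1 + cd) := by
      have h := mul_le_mul hμu1 (show 1 - t ≤ 1 + cd by linarith) (by linarith) hμ0.le
      linarith [h]
    have hμζ : μ * ζbar ≤ μ * 1 := mul_le_mul_of_nonneg_left hζbar1.le hμ0.le
    have hgplow : -(4*μ) ≤ gp := by
      rw [heq']
      linarith [hr1a, h2εa2, hEa, hmid0, hμ4L2, hμcd19, hμζ]
    have hgpup : gp ≤ 4*μ := by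
      rw [heq']
      linarith [hr1b, h2εa1, hEb, hmid2, hμ4L2, hμcd19, hμζ]
    refine ⟨hgplow, ?_⟩
    have hxp0 : 0 < X + 1 * a := by
      have h : X + 1 * a = X * (1 + t) := by
        rw [htdef]; field_simp
      rw [h]
      exact mul_pos hX (by linarith)
    have hmp0 : 0 ≤ min (X + 1 * a) 1 := le_min hxp0.le zero_le_one
    have hmp1 : min (X + 1 * a) 1 ≤ 1 := min_le_right _ _
    rw [abs_le]
    constructor
    · rcases le_or_gt 0 gp with h | h
      · linarith [mul_nonneg hmp0 h, hμ0]
      · linarith [mul_nonneg (by linarith : (0:ℝ) ≤ 1 - min (X + 1*a) 1)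
          (neg_nonneg.mpr h.le), hgplow]
    · rcases le_or_gt 0 gp with h | h
      · linarith [mul_nonneg (by linarith : (0:ℝ) ≤ 1 - min (X + 1*a) 1) h, hgpup]
      · linarith [mul_nonneg hmp0 (neg_nonneg.mpr h.le), hμ0]


/-- with `f` twice continuously differentiable, Hessian `L_H`-Lipschitz
in operator norm, tolerances `εg ∈ (0,1)`, `εH = √εg`, `μ = εg/4`, `ζ̄, ζ_r ∈ (0,1)`,
`β ∈ [εH, 1)`, a point `x > 0`, and a direction `d` with `‖X⁻¹X̄d‖∞ < β`; if the residual
`r̂ = (X̄(∇²f(x) + μX⁻²)X̄ + 2εH I)d + X̄(∇f(x) − μX⁻¹e)` satisfies `‖r̂‖∞ ≤ ζ̄μ` and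
`‖r̂‖ ≤ (ζ_r εH/2)‖d‖`, then with `x⁺ = x + X̄d` and
`c_d = min{(1−ζ̄)/9, (3/(2L_H))^{1/2}, 1/(2(L_H + 9/2 + ζ_r))}`, either `‖d‖ ≥ c_d εH`
or both `∇f(x⁺) ≥ −εg e` and `‖X̄⁺∇f(x⁺)‖∞ ≤ εg`. -/
theorem stmt8 {n : ℕ}
    (f : (Fin n → ℝ) → ℝ)
    (gradf : (Fin n → ℝ) → (Fin n → ℝ))
    (hessf : (Fin n → ℝ) → Matrix (Fin n) (Fin n) ℝ)
    (hgrad : ∀ y : Fin n → ℝ, HasFDerivAt f (dotCLM (gradf y)) y)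
    (hhess : ∀ y : Fin n → ℝ, HasFDerivAt gradf (mulVecCLM (hessf y)) y)
    (hhesscont : Continuous hessf)
    (L_H : ℝ) (hLH : 0 < L_H)
    (hlip : ∀ y z : Fin n → ℝ, opNorm (hessf y - hessf z) ≤ L_H * euclNorm (y - z))
    (εg : ℝ) (hεg : εg ∈ Set.Ioo (0:ℝ) 1)
    (εH : ℝ) (hεH : εH = Real.sqrt εg)
    (μ : ℝ) (hμ : μ = εg / 4)
    (ζbar : ℝ) (hζbar : ζbar ∈ Set.Ioo (0:ℝ) 1)
    (ζr : ℝ) (hζr : ζr ∈ Set.Ioo (0:ℝ) 1)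
    (β : ℝ) (hβ : β ∈ Set.Ico εH 1)
    (x : Fin n → ℝ) (hx : ∀ i, 0 < x i)
    (d : Fin n → ℝ)
    (hd : ‖(fun i => (min (x i) 1 / x i) * d i : Fin n → ℝ)‖ < β)
    (rhat : Fin n → ℝ)
    (hrhat : rhat =
      (Matrix.diagonal (fun i => min (x i) 1)
          * (hessf x + μ • Matrix.diagonal (fun i => ((x i)^2)⁻¹))
          * Matrix.diagonal (fun i => min (x i) 1)
        + (2 * εH) • (1 : Matrix (Fin n) (Fin n) ℝ)) *ᵥ d
      + (fun i => min (x i) 1 * (gradf x i - μ / x i)))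
    (hr1 : ‖rhat‖ ≤ ζbar * μ)
    (hr2 : euclNorm rhat ≤ (ζr * εH / 2) * euclNorm d)
    (xp : Fin n → ℝ) (hxp : xp = x + (fun i => min (x i) 1 * d i))
    (cd : ℝ)
    (hcd : cd = min (min ((1 - ζbar) / 9) (Real.sqrt (3 / (2 * L_H))))
      (1 / (2 * (L_H + 9/2 + ζr)))) :
    cd * εH ≤ euclNorm d ∨
      ((∀ i, -εg ≤ gradf xp i) ∧
        ‖(fun i => min (xp i) 1 * gradf xp i : Fin n → ℝ)‖ ≤ εg) := by
  rcases le_or_gt (cd * εH) (euclNorm d) with hge | hlt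
  · exact Or.inl hge
  right
  obtain ⟨hεg0, hεg1⟩ := hεg
  obtain ⟨hζbar0, hζbar1⟩ := hζbar
  obtain ⟨hζr0, hζr1⟩ := hζr
  obtain ⟨hβεH, hβ1⟩ := hβ
  have hεH0 : 0 < εH := by rw [hεH]; exact Real.sqrt_pos.mpr hεg0
  have hεH1 : εH ≤ 1 := by rw [hεH]; exact Real.sqrt_le_one.mpr hεg1.le
  have hεH2 : εH^2 = εg := by rw [hεH]; exact Real.sq_sqrt hεg0.le
  have hμεH : 4 * μ = εH^2 := by rw [hμ, hεH2]; ring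
  have hμ0 : 0 < μ := by rw [hμ]; linarith
  have hεg4μ : εg = 4 * μ := by rw [hμ]; ring
  -- facts about cd
  have hcd0 : 0 < cd := by
    rw [hcd]
    apply lt_min (lt_min (by linarith) (Real.sqrt_pos.mpr (by positivity)))
    positivity
  have hcd9 : 9 * cd ≤ 1 - ζbar := by
    have h := le_trans (hcd ▸ min_le_left _ _) (min_le_left ((1 - ζbar)/9) _)
    linarith
  have hcdL : cd * (2 * L_H + 9 + 2 * ζr) ≤ 1 := by
    have hD : 0 < 2 * (L_H + 9/2 + ζr) := by linarith
    have h1 : cd ≤ 1 / (2 * (L_H + 9/2 + ζr)) := hcd ▸ min_le_right _ _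
    have h2 := (le_div_iff₀ hD).mp h1
    have h3 : cd * (2 * L_H + 9 + 2 * ζr) = cd * (2 * (L_H + 9/2 + ζr)) := by ring
    linarith
  -- the step and Taylor remainder
  set s : Fin n → ℝ := fun j => min (x j) 1 * d j with hs
  have hT := taylor gradf hessf hhess L_H hLH.le hlip x s
  set e' : Fin n → ℝ := gradf (x + s) - gradf x - hessf x *ᵥ s with he'
  have hmin : ∀ i, 0 < min (x i) 1 := fun i => lt_min (hx i) one_pos
  have hmin1 : ∀ i, min (x i) 1 ≤ 1 := fun i => min_le_right _ _
  have hsd : euclNorm s ≤ euclNorm d := by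
    apply euclNorm_mono
    intro i
    rw [hs, abs_mul, abs_of_pos (hmin i)]
    exact mul_le_of_le_one_left (abs_nonneg _) (hmin1 i)
  have hscd : euclNorm s ≤ cd * εH := le_trans hsd hlt.le
  have hTbound : euclNorm e' ≤ 4 * L_H * cd^2 * μ := by
    have h1 : (euclNorm s)^2 ≤ (cd * εH)^2 :=
      pow_le_pow_left₀ (euclNorm_nonneg s) hscd 2
    have h2 : L_H * (cd * εH)^2 = 4 * L_H * cd^2 * μ := by
      linear_combination (-(L_H * cd^2)) * hμεH
    have h3 : L_H * (euclNorm s)^2 ≤ L_H * (cd * εH)^2 :=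
      mul_le_mul_of_nonneg_left h1 hLH.le
    linarith [hT]
  have hEi : ∀ i, |e' i| ≤ 4 * L_H * cd^2 * μ :=
    fun i => le_trans (abs_le_euclNorm e' i) hTbound
  have hri1 : ∀ i, |rhat i| ≤ ζbar * μ := by
    intro i
    have h := norm_le_pi_norm rhat i
    rw [Real.norm_eq_abs] at h
    linarith
  have hri2 : ∀ i, |rhat i| ≤ 2 * ζr * cd * μ := by
    intro i
    have h1 := le_trans (abs_le_euclNorm rhat i) hr2
    have h2 : ζr * εH / 2 * euclNorm d ≤ ζr * εH / 2 * (cd * εH) :=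
      mul_le_mul_of_nonneg_left hlt.le (by positivity)
    have h3 : ζr * εH / 2 * (cd * εH) = 2 * ζr * cd * μ := by
      linear_combination (-(ζr * cd) / 2) * hμεH
    linarith
  have hai : ∀ i, |d i| ≤ cd * εH :=
    fun i => le_trans (abs_le_euclNorm d i) hlt.le
  have hti : ∀ i, |min (x i) 1 / x i * d i| < β := by
    intro i
    have h := norm_le_pi_norm (fun i => (min (x i) 1 / x i) * d i) i
    rw [Real.norm_eq_abs] at h
    exact lt_of_le_of_lt h hd
  -- the componentwise combined equation
  have hcomb : ∀ i, min (x i) 1 * gradf xp i =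
      rhat i - μ * (min (x i) 1)^2 * ((x i)^2)⁻¹ * d i - 2 * εH * d i
        + min (x i) 1 * μ / x i + min (x i) 1 * e' i := by
    intro i
    have hcompi := rhat_comp (hessf x) x d μ εH (gradf x) rhat hrhat i
    have he'i : gradf xp i = gradf x i + (hessf x *ᵥ s) i + e' i := by
      have hei : e' i = gradf (x + s) i - gradf x i - (hessf x *ᵥ s) i := rfl
      rw [hxp, hei]
      ring
    rw [he'i]
    linear_combination -hcompi
  -- apply the key pointwise inequality
  have hkey : ∀ i, -(4*μ) ≤ gradf xp i ∧
      |min (x i + min (x i) 1 * d i) 1 * gradf xp i| ≤ 4*μ := by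
    intro i
    exact aux_ineq εH μ ζbar ζr β L_H cd (x i) (d i) (rhat i) (e' i) (gradf xp i)
      (hx i) hεH0 hεH1 hμεH hζbar0 hζbar1 hζr0 hζr1 hβ1 hLH hcd0 hcd9 hcdL
      (hai i) (hri1 i) (hri2 i) (hEi i) (hti i) (hcomb i)
  constructor
  · intro i
    rw [hεg4μ]
    exact (hkey i).1
  · rw [pi_norm_le_iff_of_nonneg hεg0.le]
    intro i
    rw [Real.norm_eq_abs, hεg4μ]
    have h := (hkey i).2
    have hxpi : xp i = x i + min (x i) 1 * d i := by rw [hxp]; rfl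
    rw [hxpi]
    exact h
end

section
/- Let x ∈ ℝⁿ with x > 0 componentwise, let μ > 0, and let w ∈ ℝⁿ. If ‖X̄w − μ·X̄X⁻¹e‖∞ < μ, then wᵢ > −μ for every coordinate i = 1,…,n. -/
/-- for `x > 0`, `μ > 0` and `w ∈ ℝⁿ`, if `‖X̄w − μX̄X⁻¹e‖∞ < μ` then
`wᵢ > −μ` for every coordinate `i`. The `i`-th component of `X̄w − μX̄X⁻¹e` is
`min(xᵢ,1)·wᵢ − μ·min(xᵢ,1)/xᵢ`, and `‖·‖` on `Fin n → ℝ` is the max-norm. -/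
theorem stmt9 {n : ℕ} (x w : Fin n → ℝ) (hx : ∀ i, 0 < x i) (μ : ℝ) (hμ : 0 < μ)
    (h : ‖(fun i => min (x i) 1 * w i - μ * (min (x i) 1 / x i) : Fin n → ℝ)‖ < μ) :
    ∀ i, -μ < w i := by
  intro i
  have hi := (norm_le_pi_norm (fun i => min (x i) 1 * w i - μ * (min (x i) 1 / x i)) i).trans_lt h
  rw [Real.norm_eq_abs, abs_lt] at hi
  have hxi := hx i
  rcases le_or_gt 1 (x i) with h1 | h1
  · have hm : min (x i) 1 = 1 := min_eq_right h1
    rw [hm] at hi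
    have : 0 < μ * (1 / x i) := by positivity
    linarith [hi.1]
  · have hm : min (x i) 1 = x i := min_eq_left h1.le
    rw [hm, div_self hxi.ne', mul_one] at hi
    have : 0 < x i * w i := by linarith [hi.1]
    nlinarith
end

section
/- Let x ∈ ℝⁿ with x > 0 componentwise, let β ∈ (0, 1), and let d ∈ ℝⁿ satisfy ‖X⁻¹X̄d‖∞ ≤ β. Let x⁺ = x + X̄d. Then for every coordinate i, min(x⁺ᵢ, 1) < 2·min(xᵢ, 1); consequently, for every vector w ∈ ℝⁿ, ‖X̄⁺w‖∞ ≤ 2‖X̄w‖∞, where X̄⁺ = diag(min(x⁺₁,1),…,min(x⁺ₙ,1)). -/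
/-- for `x > 0`, `β ∈ (0,1)`, `d` with `‖X⁻¹X̄d‖∞ ≤ β`, and `x⁺ = x + X̄d`,
each coordinate satisfies `min(x⁺ᵢ,1) < 2 min(xᵢ,1)`; consequently for every `w`,
`‖X̄⁺w‖∞ ≤ 2‖X̄w‖∞`. Here `x̄ᵢ = min(xᵢ,1)` and `‖·‖` on `Fin n → ℝ` is the max-norm. -/
theorem stmt10 {n : ℕ} (x d : Fin n → ℝ) (hx : ∀ i, 0 < x i)
    (β : ℝ) (hβ : β ∈ Set.Ioo (0:ℝ) 1)
    (hd : ‖(fun i => (min (x i) 1 / x i) * d i : Fin n → ℝ)‖ ≤ β)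
    (xp : Fin n → ℝ) (hxp : xp = x + (fun i => min (x i) 1 * d i)) :
    (∀ i, min (xp i) 1 < 2 * min (x i) 1) ∧
      ∀ w : Fin n → ℝ,
        ‖(fun i => min (xp i) 1 * w i : Fin n → ℝ)‖ ≤
          2 * ‖(fun i => min (x i) 1 * w i : Fin n → ℝ)‖ := by
  have hcoord : ∀ i, |min (x i) 1 / x i * d i| ≤ β := by
    intro i
    have := norm_le_pi_norm (fun i => (min (x i) 1 / x i) * d i : Fin n → ℝ) i
    simpa only [Real.norm_eq_abs] using this.trans hd
  have key : ∀ i, min (xp i) 1 < 2 * min (x i) 1 := by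
    intro i
    have hxi := hx i
    have hxpi : xp i = x i + min (x i) 1 * d i := by rw [hxp]; rfl
    rcases le_or_gt 1 (x i) with h1 | h1
    · have hmx : min (x i) 1 = 1 := min_eq_right h1
      have : min (xp i) 1 ≤ 1 := min_le_right _ _
      rw [hmx]; linarith
    · have hmx : min (x i) 1 = x i := min_eq_left h1.le
      have hc := hcoord i
      rw [hmx, div_self hxi.ne', one_mul] at hc
      have hdle : d i ≤ β := (abs_le.mp hc).2
      have hxplt : xp i < 2 * x i := by
        rw [hxpi, hmx]
        nlinarith [hβ.2]
      calc min (xp i) 1 ≤ xp i := min_le_left _ _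
        _ < 2 * x i := hxplt
        _ = 2 * min (x i) 1 := by rw [hmx]
  refine ⟨key, fun w => ?_⟩
  have h2 : (0:ℝ) ≤ 2 * ‖(fun i => min (x i) 1 * w i : Fin n → ℝ)‖ := by positivity
  rw [pi_norm_le_iff_of_nonneg h2]
  intro i
  have hxpi : 0 < xp i := by
    have hxi := hx i
    have hc := hcoord i
    have hxpi : xp i = x i + min (x i) 1 * d i := by rw [hxp]; rfl
    have : |min (x i) 1 * d i| ≤ β * x i := by
      have : min (x i) 1 / x i * d i = (min (x i) 1 * d i) / x i := by ring
      rw [this, abs_div, div_le_iff₀ (abs_pos.mpr hxi.ne')] at hc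
      calc |min (x i) 1 * d i| ≤ β * |x i| := hc
        _ = β * x i := by rw [abs_of_pos hxi]
    have := (abs_le.mp this).1
    rw [hxpi]
    nlinarith [hβ.2]
  have hb : |min (xp i) 1 * w i| ≤ 2 * |min (x i) 1 * w i| := by
    rw [abs_mul, abs_mul, abs_of_pos (lt_min hxpi one_pos),
      abs_of_pos (lt_min (hx i) one_pos)]
    nlinarith [key i, abs_nonneg (w i)]
  calc ‖min (xp i) 1 * w i‖ = |min (xp i) 1 * w i| := rfl
    _ ≤ 2 * |min (x i) 1 * w i| := hb
    _ ≤ 2 * ‖(fun i => min (x i) 1 * w i : Fin n → ℝ)‖ := by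
        have := norm_le_pi_norm (fun i => min (x i) 1 * w i : Fin n → ℝ) i
        simp only [Real.norm_eq_abs] at this
        linarith
end
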